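/- arXiv:1103.2218 — 2 statements merged into one kernel-verified Lean document; each statement's English description precedes it below -/
import Mathlib

section
/- Let Pₙ be the path with n vertices. Then its covered components polynomial satisfies, for n > 1, the recurrence C(Pₙ) = (x+y)·C(Pₙ₋₁) + (xyz − xy)·C(Pₙ₋₂) with C(P₀) = 1 and C(P₁) = x, and the explicit formula C(Pₙ,x,y,z) = xⁿ + ∑_{i=1}^{n−1} x^{n−i} y^{i} ∑_{k=1}^{min(i, n−i)} C(i−1,k−1)·C(n−i,k)·z^{k}, where C(a,b) denotes the binomial coefficient. -/
open MvPolynomial Finset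
open scoped Classical

noncomputable section

variable {V : Type}

/-- The (finite) edge set of a simple graph on a finite vertex type, as a `Finset`. -/
def edgeFinset' [Fintype V] (G : SimpleGraph V) : Finset (Sym2 V) :=
  (Set.toFinite G.edgeSet).toFinset

/-- `k(G)`: the number of connected components of `G`. -/
def kG (G : SimpleGraph V) : ℕ := Nat.card G.ConnectedComponent

/-- `c(G)`: the number of covered components of `G`, i.e. connected components
containing at least one edge. -/
def cG (G : SimpleGraph V) : ℕ :=
  Nat.card {c : G.ConnectedComponent // ∃ v w, G.Adj v w ∧ G.connectedComponentMk v = c}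

/-- The covered components polynomial
`C(G,x,y,z) = ∑_{A ⊆ E} x^{k(⟨A⟩)} y^{|A|} z^{c(⟨A⟩)}` of a finite simple graph, where
`⟨A⟩` denotes the spanning subgraph with edge set `A`, and `x = X 0`, `y = X 1`,
`z = X 2`. -/
def ccp [Fintype V] (G : SimpleGraph V) : MvPolynomial (Fin 3) ℤ :=
  ∑ A ∈ (edgeFinset' G).powerset,
    X 0 ^ kG (SimpleGraph.fromEdgeSet (A : Set (Sym2 V))) * X 1 ^ A.card *
      X 2 ^ cG (SimpleGraph.fromEdgeSet (A : Set (Sym2 V)))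

/-- `[x^i y^j z^k] P`: the coefficient of the monomial `x^i y^j z^k`. -/
def coeff3 (P : MvPolynomial (Fin 3) ℤ) (i j k : ℕ) : ℤ :=
  MvPolynomial.coeff (Finsupp.single 0 i + Finsupp.single 1 j + Finsupp.single 2 k) P

/-- `Pₙ`: the path with `n` vertices `0, 1, …, n−1` and edges `{i, i+1}`. -/
def pathG (n : ℕ) : SimpleGraph (Fin n) :=
  SimpleGraph.fromRel (fun i j => (i : ℕ) + 1 = (j : ℕ))

/-- number of runs of a finite set of naturals -/
def runs (S : Finset ℕ) : ℕ := (S.filter fun i => i = 0 ∨ i - 1 ∉ S).card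

/-- leader (leftmost element of the block) of `v` -/
def cptN (S : Finset ℕ) : ℕ → ℕ
  | 0 => 0
  | v+1 => if v ∈ S then cptN S v else v+1

lemma cptN_le (S : Finset ℕ) : ∀ v, cptN S v ≤ v := by
  intro v; induction v with
  | zero => simp [cptN]
  | succ v ih => rw [cptN]; split <;> omega

lemma cptN_mem (S : Finset ℕ) : ∀ v j, cptN S v ≤ j → j < v → j ∈ S := by
  intro v; induction v with
  | zero => omega
  | succ v ih =>
    intro j h1 h2
    rw [cptN] at h1; split at h1
    · rcases Nat.lt_succ_iff_lt_or_eq.mp h2 with h | h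
      · exact ih j h1 h
      · subst h; assumption
    · omega

lemma cptN_eq_self_iff (S : Finset ℕ) (v : ℕ) : cptN S v = v ↔ (v = 0 ∨ v - 1 ∉ S) := by
  cases v with
  | zero => simp [cptN]
  | succ v =>
    rw [cptN]
    constructor
    · intro h; split at h
      · have := cptN_le S v; omega
      · right; simpa using (by assumption : v ∉ S)
    · rintro (h | h)
      · omega
      · simp at h; simp [h]

lemma cptN_idem (S : Finset ℕ) (v : ℕ) : cptN S (cptN S v) = cptN S v := by
  induction v with
  | zero => simp [cptN]
  | succ v ih => rw [cptN]; split <;> simp_all [cptN]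

lemma cptN_step (S : Finset ℕ) {i : ℕ} (h : i ∈ S) : cptN S (i+1) = cptN S i := by
  simp [cptN, h]

lemma cptN_mem_S (S : Finset ℕ) {v : ℕ} (hv : v ∈ S) : cptN S v ∈ S := by
  rcases eq_or_lt_of_le (cptN_le S v) with h | h
  · rwa [h]
  · exact cptN_mem S v _ le_rfl h

lemma runs_insert {m : ℕ} (hm : 1 ≤ m) (S : Finset ℕ) (hS : S ⊆ range m) :
    runs (insert m S) = runs S + (if m - 1 ∈ S then 0 else 1) := by
  have hmS : m ∉ S := fun h => by simpa using hS h
  have hfilt : S.filter (fun i => i = 0 ∨ i - 1 ∉ insert m S)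
      = S.filter (fun i => i = 0 ∨ i - 1 ∉ S) := by
    apply filter_congr
    intro i hi
    have hi' : i < m := by simpa using hS hi
    constructor <;> rintro (h | h) <;> simp_all <;> omega
  unfold runs
  rw [filter_insert, hfilt]
  by_cases h : m - 1 ∈ S
  · have : ¬ (m = 0 ∨ m - 1 ∉ insert m S) := by
      push_neg; refine ⟨by omega, by simp [h]⟩
    rw [if_neg this, if_pos h]; omega
  · have hne : m - 1 ≠ m := by omega
    have : (m = 0 ∨ m - 1 ∉ insert m S) := by
      right; simp [hne, h]
    rw [if_pos this, if_neg h, card_insert_of_notMem (by simp [hmS])]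

/-- the string-model covered components polynomial of the path on n vertices -/
noncomputable def T (n : ℕ) : MvPolynomial (Fin 3) ℤ :=
  ∑ S ∈ (range (n-1)).powerset,
    X 0 ^ (n - S.card) * X 1 ^ S.card * X 2 ^ runs S

lemma powerset_filter_not_mem (m : ℕ) :
    ((range (m+1)).powerset.filter fun S => m ∉ S) = (range m).powerset := by
  ext S
  simp only [mem_filter, mem_powerset, range_add_one]
  constructor
  · rintro ⟨h1, h2⟩ i hi
    have := h1 hi
    rw [mem_insert] at this
    rcases this with h | h
    · exact absurd (h ▸ hi) h2
    · exact h
  · intro h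
    exact ⟨h.trans (subset_insert _ _), fun hm => by simpa using h hm⟩

lemma T_zero : T 0 = 1 := by simp [T, runs]
lemma T_one : T 1 = X 0 := by simp [T, runs]

lemma T_rec (m : ℕ) : T (m+2) = (X 0 + X 1) * T (m+1) + (X 0 * X 1 * X 2 - X 0 * X 1) * T m := by
  rcases Nat.eq_zero_or_pos m with rfl | hm
  · rw [T_one, T_zero]
    show ∑ S ∈ (range 1).powerset, _ = _
    rw [show range 1 = {0} from rfl]
    rw [show ({0} : Finset ℕ).powerset = {∅, {0}} from rfl]
    rw [sum_insert (by exact fun h => (Finset.singleton_ne_empty 0) ((mem_singleton.mp h).symm))]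
    rw [sum_singleton]
    rw [show runs ∅ = 0 by simp [runs], show runs {0} = 1 by simp [runs, filter_singleton]]
    simp
    ring
  · -- m ≥ 1
    have key : T (m+2) = ∑ S ∈ (range m).powerset,
        (X 0 ^ (m+2 - S.card) * X 1 ^ S.card * X 2 ^ runs S : MvPolynomial (Fin 3) ℤ)
        + ∑ S ∈ (range m).powerset,
        (X 0 ^ (m+2 - (insert m S).card) * X 1 ^ (insert m S).card * X 2 ^ runs (insert m S)) := by
      unfold T
      rw [show m+2-1 = m+1 from rfl, range_add_one,
        Finset.sum_powerset_insert (by simp)]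
    rw [key]
    have e1 : ∑ S ∈ (range m).powerset,
        (X 0 ^ (m+2 - S.card) * X 1 ^ S.card * X 2 ^ runs S : MvPolynomial (Fin 3) ℤ)
        = X 0 * T (m+1) := by
      rw [T, Finset.mul_sum, show m+1-1 = m from rfl]
      apply sum_congr rfl
      intro S hS
      have : S.card ≤ m := le_trans (card_le_card (mem_powerset.mp hS)) (by simp)
      rw [show m+2-S.card = (m+1-S.card)+1 by omega]
      ring
    rw [e1]
    have e2 : ∀ S ∈ (range m).powerset,
        (X 0 ^ (m+2 - (insert m S).card) * X 1 ^ (insert m S).card * X 2 ^ runs (insert m S)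
          : MvPolynomial (Fin 3) ℤ)
        = X 1 * (X 0 ^ (m+1 - S.card) * X 1 ^ S.card * X 2 ^ runs S)
            * (if m - 1 ∈ S then 1 else X 2) := by
      intro S hS
      rw [mem_powerset] at hS
      have hmS : m ∉ S := fun h => by simpa using hS h
      have hc : S.card ≤ m := le_trans (card_le_card hS) (by simp)
      rw [card_insert_of_notMem hmS, runs_insert hm S hS]
      by_cases h : m - 1 ∈ S <;> simp only [h, if_pos, if_neg, if_true, if_false]
      · rw [show m+2-(S.card+1) = (m+1)-S.card by omega]; ring
      · rw [show m+2-(S.card+1) = (m+1)-S.card by omega, pow_succ]; ring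
    rw [sum_congr rfl e2]
    rw [← Finset.sum_filter_add_sum_filter_not ((range m).powerset) (fun S => m - 1 ∈ S)]
    have hps : ((range m).powerset.filter fun S => ¬ m - 1 ∈ S) = (range (m-1)).powerset := by
      have := powerset_filter_not_mem (m-1)
      rwa [show m-1+1 = m by omega] at this
    have hTm1 : T (m+1) = ∑ S ∈ (range m).powerset,
        (X 0 ^ (m+1 - S.card) * X 1 ^ S.card * X 2 ^ runs S : MvPolynomial (Fin 3) ℤ) := by
      rw [T, show m+1-1 = m from rfl]
    have hsub : ∑ S ∈ (range (m-1)).powerset,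
        (X 0 ^ (m+1 - S.card) * X 1 ^ S.card * X 2 ^ runs S : MvPolynomial (Fin 3) ℤ)
        = X 0 * T m := by
      rw [T, Finset.mul_sum]
      apply sum_congr rfl
      intro S hS
      have : S.card ≤ m - 1 := le_trans (card_le_card (mem_powerset.mp hS)) (by simp)
      rw [show m+1-S.card = (m-S.card)+1 by omega]
      ring
    have eA : ∑ S ∈ (range m).powerset.filter (fun S => m - 1 ∈ S),
        (X 1 * (X 0 ^ (m+1 - S.card) * X 1 ^ S.card * X 2 ^ runs S)
            * (if m - 1 ∈ S then 1 else X 2) : MvPolynomial (Fin 3) ℤ)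
        = X 1 * T (m+1) - X 1 * (X 0 * T m) := by
      have : ∀ S ∈ (range m).powerset.filter (fun S => m - 1 ∈ S),
          (X 1 * (X 0 ^ (m+1 - S.card) * X 1 ^ S.card * X 2 ^ runs S)
            * (if m - 1 ∈ S then 1 else X 2) : MvPolynomial (Fin 3) ℤ)
          = X 1 * (X 0 ^ (m+1 - S.card) * X 1 ^ S.card * X 2 ^ runs S) := by
        intro S hS
        rw [if_pos (mem_filter.mp hS).2, mul_one]
      rw [sum_congr rfl this, ← Finset.mul_sum]
      have := Finset.sum_filter_add_sum_filter_not ((range m).powerset) (fun S => m - 1 ∈ S)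
        (fun S => (X 0 ^ (m+1 - S.card) * X 1 ^ S.card * X 2 ^ runs S : MvPolynomial (Fin 3) ℤ))
      rw [hps, hsub] at this
      rw [← hTm1] at this
      rw [show ∑ S ∈ (range m).powerset.filter (fun S => m - 1 ∈ S),
          (X 0 ^ (m+1 - S.card) * X 1 ^ S.card * X 2 ^ runs S : MvPolynomial (Fin 3) ℤ)
          = T (m+1) - X 0 * T m by linear_combination this]
      ring
    have eB : ∑ S ∈ (range m).powerset.filter (fun S => ¬ m - 1 ∈ S),
        (X 1 * (X 0 ^ (m+1 - S.card) * X 1 ^ S.card * X 2 ^ runs S)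
            * (if m - 1 ∈ S then 1 else X 2) : MvPolynomial (Fin 3) ℤ)
        = X 1 * X 2 * (X 0 * T m) := by
      rw [hps]
      have : ∀ S ∈ (range (m-1)).powerset,
          (X 1 * (X 0 ^ (m+1 - S.card) * X 1 ^ S.card * X 2 ^ runs S)
            * (if m - 1 ∈ S then 1 else X 2) : MvPolynomial (Fin 3) ℤ)
          = (X 1 * X 2) * (X 0 ^ (m+1 - S.card) * X 1 ^ S.card * X 2 ^ runs S) := by
        intro S hS
        rw [mem_powerset] at hS
        rw [if_neg (fun h => by simpa using hS h)]
        ring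
      rw [sum_congr rfl this, ← Finset.mul_sum, hsub]
    rw [eA, eB]
    ring

/-- coefficient of x^{n-i} y^i z^k in C(P_n) -/
def bc (n i k : ℕ) : ℕ :=
  if i = 0 then (if k = 0 then 1 else 0)
  else if k = 0 then 0
  else (i-1).choose (k-1) * (n-i).choose k

lemma bc_eq_zero {n i k : ℕ} (h : n < i ∨ n < k) : bc n i k = 0 := by
  rcases h with h | h
  · have hi : i ≠ 0 := by omega
    rcases Nat.eq_zero_or_pos k with rfl | hk
    · simp [bc, hi]
    · rw [bc, if_neg hi, if_neg (by omega)]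
      rw [show n - i = 0 by omega, Nat.choose_eq_zero_of_lt hk]
      simp
  · have hk : k ≠ 0 := by omega
    rcases Nat.eq_zero_or_pos i with rfl | hi
    · simp [bc, hk]
    · rw [bc, if_neg (by omega), if_neg hk]
      rw [Nat.choose_eq_zero_of_lt (by omega : n - i < k)]
      simp

lemma bc_one_succ (a c : ℕ) : bc a 1 (c+1) = Nat.choose 0 c * (a-1).choose (c+1) := by
  simp [bc]

lemma bc_succ_succ (a b c : ℕ) : bc a (b+1) (c+1) = b.choose c * (a - (b+1)).choose (c+1) := by
  simp [bc]

lemma bc_rec (m i k : ℕ) :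
    bc (m+2) i k + (if i = 0 then 0 else bc m (i-1) k)
      = bc (m+1) i k + (if i = 0 then 0 else bc (m+1) (i-1) k)
        + (if i = 0 ∨ k = 0 then 0 else bc m (i-1) (k-1)) := by
  rcases i with _ | i
  · simp [bc]
  rcases k with _ | k
  · simp [bc]
  simp only [Nat.succ_ne_zero, if_neg, Nat.add_sub_cancel, false_or, if_false,
    Nat.succ_sub_one, or_self]
  -- goal: bc (m+2) (i+1) (k+1) + bc m i (k+1) = bc (m+1) (i+1) (k+1) + bc (m+1) i (k+1) + bc m i k
  rcases i with _ | j
  · -- i = 1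
    rw [bc_one_succ, bc_one_succ]
    rcases k with _ | c
    · simp [bc, Nat.choose_one_right]
    · simp [bc, Nat.choose_eq_zero_of_lt (by omega : 0 < c + 1)]
  · -- i = j + 2
    rw [bc_succ_succ, bc_succ_succ, bc_succ_succ, bc_succ_succ]
    rw [show m + 2 - (j+2) = m - j by omega, show m + 1 - (j+2) = m - (j+1) by omega,
      show m + 1 - (j+1) = m - j by omega]
    rcases k with _ | l
    · -- k = 1
      simp [bc, Nat.choose_one_right]
      omega
    · -- k = l + 2
      rw [bc_succ_succ]
      rcases Nat.lt_or_ge m (j+1) with h | h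
      · rw [show m - j = 0 by omega, show m - (j+1) = 0 by omega]
        simp
      · rw [show m - j = (m - (j+1)) + 1 by omega]
        set q := m - (j+1) with hq
        rw [Nat.choose_succ_succ q (l+1), Nat.choose_succ_succ j l]
        simp only [Nat.succ_eq_add_one]
        ring

noncomputable def F (n : ℕ) : MvPolynomial (Fin 3) ℤ :=
  ∑ i ∈ range (n+1), ∑ k ∈ range (n+1),
    (bc n i k : MvPolynomial (Fin 3) ℤ) * X 0 ^ (n-i) * X 1 ^ i * X 2 ^ k

lemma F_big (n N : ℕ) (h : n ≤ N) :
    F n = ∑ i ∈ range (N+1), ∑ k ∈ range (N+1),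
      (bc n i k : MvPolynomial (Fin 3) ℤ) * X 0 ^ (n-i) * X 1 ^ i * X 2 ^ k := by
  rw [F]
  rw [← Finset.sum_subset (range_subset_range.mpr (by omega) : range (n+1) ⊆ range (N+1))]
  · apply sum_congr rfl
    intro i _
    rw [← Finset.sum_subset (range_subset_range.mpr (by omega) : range (n+1) ⊆ range (N+1))]
    intro k _ hk
    rw [bc_eq_zero (Or.inr (by simp at hk ⊢; omega))]
    simp
  · intro i _ hi
    apply Finset.sum_eq_zero
    intro k _
    rw [bc_eq_zero (Or.inl (by simp at hi; omega))]
    simp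

lemma F_rec (m : ℕ) :
    F (m+2) = (X 0 + X 1) * F (m+1) + (X 0 * X 1 * X 2 - X 0 * X 1) * F m := by
  have E1 : X 0 * F (m+1) = ∑ i ∈ range (m+3), ∑ k ∈ range (m+3),
      (bc (m+1) i k : MvPolynomial (Fin 3) ℤ) * X 0 ^ (m+2-i) * X 1 ^ i * X 2 ^ k := by
    rw [F_big (m+1) (m+2) (by omega), Finset.mul_sum]
    apply sum_congr rfl
    intro i hi
    rw [Finset.mul_sum]
    apply sum_congr rfl
    intro k hk
    by_cases h : i ≤ m + 1
    · rw [show m+2-i = (m+1-i)+1 by omega, pow_succ]; ring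
    · rw [bc_eq_zero (Or.inl (by omega : m+1 < i))]; simp
  have E2 : (∑ i ∈ range (m+3), ∑ k ∈ range (m+3),
      ((if i = 0 then 0 else bc (m+1) (i-1) k : ℕ) : MvPolynomial (Fin 3) ℤ)
        * X 0 ^ (m+2-i) * X 1 ^ i * X 2 ^ k) = X 1 * F (m+1) := by
    rw [Finset.sum_range_succ' _ (m+2)]
    rw [show (∑ k ∈ range (m+3),
        ((if (0:ℕ) = 0 then 0 else bc (m+1) (0-1) k : ℕ) : MvPolynomial (Fin 3) ℤ)
          * X 0 ^ (m+2-0) * X 1 ^ 0 * X 2 ^ k) = 0 from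
      Finset.sum_eq_zero (fun k _ => by simp), add_zero]
    have step : ∀ i ∈ range (m+2), (∑ k ∈ range (m+3),
        ((if (i+1) = 0 then 0 else bc (m+1) (i+1-1) k : ℕ) : MvPolynomial (Fin 3) ℤ)
          * X 0 ^ (m+2-(i+1)) * X 1 ^ (i+1) * X 2 ^ k)
        = X 1 * ∑ k ∈ range (m+2),
          (bc (m+1) i k : MvPolynomial (Fin 3) ℤ) * X 0 ^ (m+1-i) * X 1 ^ i * X 2 ^ k := by
      intro i hi
      rw [Finset.sum_range_succ]
      rw [bc_eq_zero (Or.inr (by omega : m+1 < m+2)), Finset.mul_sum]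
      simp only [Nat.cast_zero, zero_mul, add_zero, Nat.succ_ne_zero, if_false,
        Nat.add_sub_cancel]
      apply sum_congr rfl
      intro k hk
      rw [show m+2-(i+1) = m+1-i by omega, pow_succ]
      ring
    rw [sum_congr rfl step, ← Finset.mul_sum, F]
  have E4 : (∑ i ∈ range (m+3), ∑ k ∈ range (m+3),
      ((if i = 0 then 0 else bc m (i-1) k : ℕ) : MvPolynomial (Fin 3) ℤ)
        * X 0 ^ (m+2-i) * X 1 ^ i * X 2 ^ k) = X 0 * X 1 * F m := by
    rw [Finset.sum_range_succ' _ (m+2)]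
    rw [show (∑ k ∈ range (m+3),
        ((if (0:ℕ) = 0 then 0 else bc m (0-1) k : ℕ) : MvPolynomial (Fin 3) ℤ)
          * X 0 ^ (m+2-0) * X 1 ^ 0 * X 2 ^ k) = 0 from
      Finset.sum_eq_zero (fun k _ => by simp), add_zero]
    rw [Finset.sum_range_succ]
    rw [show (∑ k ∈ range (m+3),
        ((if (m+1+1) = 0 then 0 else bc m (m+1+1-1) k : ℕ) : MvPolynomial (Fin 3) ℤ)
          * X 0 ^ (m+2-(m+1+1)) * X 1 ^ (m+1+1) * X 2 ^ k) = 0 from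
      Finset.sum_eq_zero (fun k _ => by
        rw [show m+1+1-1 = m+1 from rfl, bc_eq_zero (Or.inl (by omega : m < m+1))]
        simp), add_zero]
    have step : ∀ i ∈ range (m+1), (∑ k ∈ range (m+3),
        ((if (i+1) = 0 then 0 else bc m (i+1-1) k : ℕ) : MvPolynomial (Fin 3) ℤ)
          * X 0 ^ (m+2-(i+1)) * X 1 ^ (i+1) * X 2 ^ k)
        = X 0 * X 1 * ∑ k ∈ range (m+1),
          (bc m i k : MvPolynomial (Fin 3) ℤ) * X 0 ^ (m-i) * X 1 ^ i * X 2 ^ k := by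
      intro i hi
      rw [mem_range] at hi
      rw [Finset.sum_range_succ, Finset.sum_range_succ]
      rw [bc_eq_zero (Or.inr (by omega : m < m+2)), bc_eq_zero (Or.inr (by omega : m < m+1)),
        Finset.mul_sum]
      simp only [Nat.cast_zero, zero_mul, add_zero, Nat.succ_ne_zero, if_false,
        Nat.add_sub_cancel]
      apply sum_congr rfl
      intro k hk
      rw [show m+2-(i+1) = (m-i)+1 by omega, pow_succ, pow_succ]
      ring
    rw [sum_congr rfl step, ← Finset.mul_sum, F]
  have E3 : (∑ i ∈ range (m+3), ∑ k ∈ range (m+3),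
      ((if i = 0 ∨ k = 0 then 0 else bc m (i-1) (k-1) : ℕ) : MvPolynomial (Fin 3) ℤ)
        * X 0 ^ (m+2-i) * X 1 ^ i * X 2 ^ k) = X 0 * X 1 * X 2 * F m := by
    rw [Finset.sum_range_succ' _ (m+2)]
    rw [show (∑ k ∈ range (m+3),
        ((if (0:ℕ) = 0 ∨ k = 0 then 0 else bc m (0-1) (k-1) : ℕ) : MvPolynomial (Fin 3) ℤ)
          * X 0 ^ (m+2-0) * X 1 ^ 0 * X 2 ^ k) = 0 from
      Finset.sum_eq_zero (fun k _ => by simp), add_zero]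
    rw [Finset.sum_range_succ]
    rw [show (∑ k ∈ range (m+3),
        ((if (m+1+1) = 0 ∨ k = 0 then 0 else bc m (m+1+1-1) (k-1) : ℕ) : MvPolynomial (Fin 3) ℤ)
          * X 0 ^ (m+2-(m+1+1)) * X 1 ^ (m+1+1) * X 2 ^ k) = 0 from
      Finset.sum_eq_zero (fun k _ => by
        rcases Nat.eq_zero_or_pos k with rfl | hk
        · simp
        · rw [show m+1+1-1 = m+1 from rfl, bc_eq_zero (Or.inl (by omega : m < m+1))]
          simp), add_zero]
    have step : ∀ i ∈ range (m+1), (∑ k ∈ range (m+3),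
        ((if (i+1) = 0 ∨ k = 0 then 0 else bc m (i+1-1) (k-1) : ℕ) : MvPolynomial (Fin 3) ℤ)
          * X 0 ^ (m+2-(i+1)) * X 1 ^ (i+1) * X 2 ^ k)
        = X 0 * X 1 * X 2 * ∑ k ∈ range (m+1),
          (bc m i k : MvPolynomial (Fin 3) ℤ) * X 0 ^ (m-i) * X 1 ^ i * X 2 ^ k := by
      intro i hi
      rw [mem_range] at hi
      rw [Finset.sum_range_succ' _ (m+2)]
      rw [show ((if (i+1) = 0 ∨ (0:ℕ) = 0 then 0 else bc m (i+1-1) (0-1) : ℕ)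
          : MvPolynomial (Fin 3) ℤ) * X 0 ^ (m+2-(i+1)) * X 1 ^ (i+1) * X 2 ^ 0 = 0 by
        simp]
      rw [add_zero, Finset.sum_range_succ]
      rw [show ((if (i+1) = 0 ∨ (m+1)+1 = 0 then 0 else bc m (i+1-1) ((m+1)+1-1) : ℕ)
          : MvPolynomial (Fin 3) ℤ) * X 0 ^ (m+2-(i+1)) * X 1 ^ (i+1) * X 2 ^ ((m+1)+1) = 0 by
        rw [show (m+1)+1-1 = m+1 from rfl, show i+1-1 = i from rfl,
          if_neg (by omega), bc_eq_zero (Or.inr (by omega : m < m+1))]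
        simp]
      rw [add_zero, Finset.mul_sum]
      apply sum_congr rfl
      intro k hk
      rw [mem_range] at hk
      simp only [Nat.succ_ne_zero, false_or, if_false, Nat.add_sub_cancel]
      rw [show m+2-(i+1) = (m-i)+1 by omega, pow_succ, pow_succ, pow_succ]
      ring
    rw [sum_congr rfl step, ← Finset.mul_sum, F]
  have hrhs : (X 0 + X 1) * F (m+1) + (X 0 * X 1 * X 2 - X 0 * X 1) * F m
      = X 0 * F (m+1) + X 1 * F (m+1) + X 0 * X 1 * X 2 * F m - X 0 * X 1 * F m := by
    ring
  rw [hrhs, E1, ← E2, ← E3, ← E4, F]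
  rw [← Finset.sum_add_distrib, ← Finset.sum_add_distrib, ← Finset.sum_sub_distrib]
  apply sum_congr rfl
  intro i _
  rw [← Finset.sum_add_distrib, ← Finset.sum_add_distrib, ← Finset.sum_sub_distrib]
  apply sum_congr rfl
  intro k _
  have key := bc_rec m i k
  have keyP : ((bc (m+2) i k : MvPolynomial (Fin 3) ℤ)
        + ((if i = 0 then 0 else bc m (i-1) k : ℕ) : MvPolynomial (Fin 3) ℤ))
      = ((bc (m+1) i k : ℕ) : MvPolynomial (Fin 3) ℤ)
        + ((if i = 0 then 0 else bc (m+1) (i-1) k : ℕ) : MvPolynomial (Fin 3) ℤ)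
        + ((if i = 0 ∨ k = 0 then 0 else bc m (i-1) (k-1) : ℕ) : MvPolynomial (Fin 3) ℤ) := by
    exact_mod_cast congrArg (Nat.cast : ℕ → MvPolynomial (Fin 3) ℤ) key
  linear_combination (X 0 ^ (m+2-i) * X 1 ^ i * X 2 ^ k : MvPolynomial (Fin 3) ℤ) * keyP

lemma F_zero : F 0 = 1 := by simp [F, bc]
lemma F_one : F 1 = X 0 := by
  rw [F]
  rw [show (1:ℕ)+1 = 2 from rfl]
  rw [Finset.sum_range_succ, Finset.sum_range_one, Finset.sum_range_succ,
    Finset.sum_range_one, Finset.sum_range_succ, Finset.sum_range_one]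
  norm_num [bc]

lemma F_formula (n : ℕ) : F n =
    X 0 ^ n + ∑ i ∈ Finset.Icc 1 (n - 1), X 0 ^ (n - i) * X 1 ^ i *
      ∑ k ∈ Finset.Icc 1 (min i (n - i)),
        (((i - 1).choose (k - 1) * (n - i).choose k : ℕ) : MvPolynomial (Fin 3) ℤ) *
          X 2 ^ k := by
  rcases Nat.eq_zero_or_pos n with rfl | hn
  · simp [F_zero]
  rw [F, Finset.sum_range_succ' _ n]
  have h0 : (∑ k ∈ range (n+1),
      (bc n 0 k : MvPolynomial (Fin 3) ℤ) * X 0 ^ (n-0) * X 1 ^ 0 * X 2 ^ k) = X 0 ^ n := by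
    rw [Finset.sum_eq_single 0]
    · simp [bc]
    · intro k _ hk
      rw [show bc n 0 k = 0 by simp [bc, hk]]
      simp
    · intro h
      exact absurd (mem_range.mpr (by omega)) h
  rw [h0]
  rw [show n = (n-1)+1 by omega, Finset.sum_range_succ]
  rw [show (∑ k ∈ range ((n-1)+1+1),
      (bc ((n-1)+1) ((n-1)+1) k : MvPolynomial (Fin 3) ℤ)
        * X 0 ^ ((n-1)+1-((n-1)+1)) * X 1 ^ ((n-1)+1) * X 2 ^ k) = 0 from
    Finset.sum_eq_zero (fun k _ => by
      rcases Nat.eq_zero_or_pos k with rfl | hk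
      · simp [bc]
      · rw [show bc ((n-1)+1) ((n-1)+1) k = 0 by
          rw [bc, if_neg (by omega), if_neg (by omega), Nat.sub_self,
            Nat.choose_eq_zero_of_lt hk, mul_zero]]
        simp), add_zero]
  rw [show Finset.Icc 1 ((n-1)+1-1) = Finset.Ico 1 ((n-1)+1) by
    rw [Finset.Ico_add_one_right_eq_Icc]; norm_num]
  rw [Finset.sum_Ico_eq_sum_range]
  rw [show (n-1)+1-1 = n-1 by omega]
  rw [add_comm]
  congr 1
  apply sum_congr rfl
  intro i hi
  rw [mem_range] at hi
  rw [show 1+i = i+1 by ring]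
  rw [Finset.mul_sum]
  have hsub : Finset.Icc 1 (min (i+1) ((n-1)+1-(i+1))) ⊆ range ((n-1)+1+1) := by
    intro k hk
    rw [Finset.mem_Icc] at hk
    rw [mem_range]
    omega
  rw [← Finset.sum_subset hsub]
  · apply sum_congr rfl
    intro k hk
    rw [Finset.mem_Icc] at hk
    rw [bc, if_neg (by omega), if_neg (by omega), Nat.add_sub_cancel, Nat.cast_mul]
    push_cast
    ring
  · intro k hkr hk
    rw [Finset.mem_Icc, not_and_or] at hk
    have : bc ((n-1)+1) (i+1) k = 0 := by
      rcases hk with hk | hk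
      · have : k = 0 := by omega
        subst this
        simp [bc]
      · push_neg at hk
        rw [bc, if_neg (by omega)]
        rcases Nat.eq_zero_or_pos k with rfl | hkpos
        · simp
        rw [if_neg (by omega)]
        rcases Nat.lt_or_ge (i+1) k with h | h
        · rw [Nat.choose_eq_zero_of_lt (by omega : i+1-1 < k-1), zero_mul]
        · rw [Nat.choose_eq_zero_of_lt (by omega : (n-1)+1-(i+1) < k), mul_zero]
    rw [this]
    simp

-- edge encoding
def ve (n i : ℕ) : Fin (n+1) := ⟨min i n, by omega⟩
def ge (n i : ℕ) : Sym2 (Fin (n+1)) := s(ve n i, ve n (i+1))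
def fe (n : ℕ) : Sym2 (Fin (n+1)) → ℕ :=
  Sym2.lift ⟨fun a b => min a.1 b.1, fun a b => min_comm _ _⟩

lemma ve_eq {n i : ℕ} (h : i ≤ n) : (ve n i : ℕ) = i := by simp [ve]; omega

lemma fe_ge {n i : ℕ} (h : i < n) : fe n (ge n i) = i := by
  simp only [fe, ge, Sym2.lift_mk]
  rw [ve_eq (by omega), ve_eq (by omega)]
  omega

lemma mem_edge {n : ℕ} (e : Sym2 (Fin (n+1))) :
    e ∈ edgeFinset' (pathG (n+1)) ↔ ∃ i, i < n ∧ e = ge n i := by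
  rw [edgeFinset', Set.Finite.mem_toFinset]
  induction e with
  | _ a b =>
    rw [SimpleGraph.mem_edgeSet]
    constructor
    · intro h
      rw [pathG, SimpleGraph.fromRel_adj] at h
      obtain ⟨hne, h | h⟩ := h
      · refine ⟨a.1, by omega, ?_⟩
        rw [ge, Sym2.eq_iff]
        left
        constructor <;> (apply Fin.ext; rw [ve_eq (by omega)]; try omega)
      · refine ⟨b.1, by omega, ?_⟩
        rw [ge, Sym2.eq_iff]
        right
        constructor <;> (apply Fin.ext; rw [ve_eq (by omega)]; try omega)
    · rintro ⟨i, hi, h⟩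
      rw [ge, Sym2.eq_iff] at h
      rw [pathG, SimpleGraph.fromRel_adj]
      rcases h with ⟨rfl, rfl⟩ | ⟨rfl, rfl⟩
      · refine ⟨?_, Or.inl ?_⟩
        · intro hc
          have := congrArg Fin.val hc
          rw [ve_eq (by omega), ve_eq (by omega)] at this
          omega
        · rw [ve_eq (by omega), ve_eq (by omega)]
      · refine ⟨?_, Or.inr ?_⟩
        · intro hc
          have := congrArg Fin.val hc
          rw [ve_eq (by omega), ve_eq (by omega)] at this
          omega
        · rw [ve_eq (by omega), ve_eq (by omega)]
section GS
variable {n : ℕ} {S : Finset ℕ} (hS : S ⊆ range n)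

def GS (n : ℕ) (S : Finset ℕ) : SimpleGraph (Fin (n+1)) :=
  SimpleGraph.fromEdgeSet ((S.image (ge n) : Finset (Sym2 (Fin (n+1)))) : Set (Sym2 (Fin (n+1))))

lemma GS_adj {a b : Fin (n+1)} :
    (GS n S).Adj a b ↔ (∃ i ∈ S, s(a, b) = ge n i) ∧ a ≠ b := by
  rw [GS, SimpleGraph.fromEdgeSet_adj]
  simp [Finset.mem_coe, eq_comm]

include hS in
lemma adj_cpt {a b : Fin (n+1)} (h : (GS n S).Adj a b) : cptN S a.1 = cptN S b.1 := by
  rw [GS_adj] at h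
  obtain ⟨⟨i, hi, he⟩, hne⟩ := h
  have hin : i < n := by simpa using hS hi
  rw [ge, Sym2.eq_iff] at he
  have h1 : (ve n i : ℕ) = i := ve_eq (by omega)
  have h2 : (ve n (i+1) : ℕ) = i + 1 := ve_eq (by omega)
  have hstep := cptN_step S hi
  rcases he with ⟨ha, hb⟩ | ⟨ha, hb⟩
  · rw [congrArg Fin.val ha, congrArg Fin.val hb, h1, h2, hstep]
  · rw [congrArg Fin.val ha, congrArg Fin.val hb, h1, h2, hstep]

def leadF (S : Finset ℕ) (v : Fin (n+1)) : Fin (n+1) :=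
  ⟨cptN S v.1, by have := cptN_le S v.1; omega⟩

include hS in
lemma reach_lead : ∀ (m : ℕ) (h : m < n+1), (GS n S).Reachable ⟨m, h⟩ (leadF S ⟨m, h⟩) := by
  intro m
  induction m with
  | zero => intro h; rw [show leadF S ⟨0, h⟩ = ⟨0, h⟩ from Fin.ext (by simp [leadF, cptN])]
  | succ m ih =>
    intro h
    by_cases hm : m ∈ S
    · have hmn : m < n := by simpa using hS hm
      have hadj : (GS n S).Adj ⟨m+1, h⟩ ⟨m, by omega⟩ := by
        rw [GS_adj]
        refine ⟨⟨m, hm, ?_⟩, ?_⟩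
        · rw [ge, Sym2.eq_iff]
          right
          constructor <;> (apply Fin.ext; rw [ve_eq (by omega)]; try omega)
        · intro hc; have := congrArg Fin.val hc; simp at this
      have hlead : leadF S ⟨m+1, h⟩ = leadF S ⟨m, by omega⟩ := by
        apply Fin.ext
        simp only [leadF]
        exact cptN_step S hm
      rw [hlead]
      exact hadj.reachable.trans (ih (by omega))
    · rw [show leadF S ⟨m+1, h⟩ = ⟨m+1, h⟩ from Fin.ext (by simp [leadF, cptN, hm])]

include hS in
lemma reach_iff {a b : Fin (n+1)} :
    (GS n S).Reachable a b ↔ cptN S a.1 = cptN S b.1 := by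
  constructor
  · intro h
    obtain ⟨w⟩ := h
    induction w with
    | nil => rfl
    | cons hadj p ih => rw [adj_cpt hS hadj]; exact ih
  · intro h
    have ha := reach_lead hS a.1 a.2
    have hb := reach_lead hS b.1 b.2
    rw [show (⟨a.1, a.2⟩ : Fin (n+1)) = a from rfl] at ha
    rw [show (⟨b.1, b.2⟩ : Fin (n+1)) = b from rfl] at hb
    have : leadF S a = leadF S b := Fin.ext h
    exact (ha.trans (this ▸ hb.symm))

def phi (hS : S ⊆ range n) : (GS n S).ConnectedComponent → Fin (n+1) :=
  SimpleGraph.ConnectedComponent.lift (leadF S)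
    (fun _ _ p _ => Fin.ext ((reach_iff hS).mp ⟨p⟩))

lemma phi_mk (hS : S ⊆ range n) (v : Fin (n+1)) :
    phi hS ((GS n S).connectedComponentMk v) = leadF S v := rfl

include hS in
lemma phi_inj : Function.Injective (phi hS) := by
  intro c d
  refine SimpleGraph.ConnectedComponent.ind₂ (fun v w h => ?_) c d
  exact SimpleGraph.ConnectedComponent.sound
    ((reach_iff hS).mpr (congrArg Fin.val h))

include hS in
lemma adj_lead_mem {a b : Fin (n+1)} (h : (GS n S).Adj a b) : cptN S a.1 ∈ S := by
  rw [GS_adj] at h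
  obtain ⟨⟨i, hi, he⟩, hne⟩ := h
  have hin : i < n := by simpa using hS hi
  rw [ge, Sym2.eq_iff] at he
  have h1 : (ve n i : ℕ) = i := ve_eq (by omega)
  have h2 : (ve n (i+1) : ℕ) = i + 1 := ve_eq (by omega)
  have key : cptN S a.1 = cptN S i := by
    rcases he with ⟨ha, _⟩ | ⟨ha, _⟩
    · rw [congrArg Fin.val ha, h1]
    · rw [congrArg Fin.val ha, h2, cptN_step S hi]
  rw [key]
  exact cptN_mem_S S hi

include hS in
lemma kG_GS : kG (GS n S) = n + 1 - S.card := by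
  rw [kG, ← Nat.card_range_of_injective (phi_inj hS)]
  have h2 : Set.range (phi hS) = Set.range (leadF S : Fin (n+1) → Fin (n+1)) := by
    ext x
    constructor
    · rintro ⟨c, rfl⟩
      obtain ⟨v, rfl⟩ := c.exists_rep
      exact ⟨v, rfl⟩
    · rintro ⟨v, rfl⟩
      exact ⟨(GS n S).connectedComponentMk v, rfl⟩
  have h3 : Set.range (leadF S : Fin (n+1) → Fin (n+1))
      = ((Finset.image (leadF S) univ : Finset (Fin (n+1))) : Set (Fin (n+1))) := by
    rw [coe_image, coe_univ, Set.image_univ]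
  rw [h2, h3, Nat.card_coe_set_eq, Set.ncard_coe_finset]
  have himg : Finset.image (leadF S) univ
      = univ.filter (fun v : Fin (n+1) => leadF S v = v) := by
    ext v
    simp only [mem_image, mem_filter, mem_univ, true_and]
    constructor
    · rintro ⟨w, rfl⟩
      exact Fin.ext (cptN_idem S w.1)
    · intro h
      exact ⟨v, h⟩
  rw [himg]
  have hneg : (univ.filter (fun v : Fin (n+1) => ¬ leadF S v = v)).card = S.card := by
    apply Finset.card_bij (fun (v : Fin (n+1)) _ => v.1 - 1)
    · intro v hv
      rw [mem_filter] at hv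
      have : ¬ cptN S v.1 = v.1 := fun h => hv.2 (Fin.ext h)
      rw [cptN_eq_self_iff] at this
      push_neg at this
      simpa using this.2
    · intro v hv w hw h
      rw [mem_filter] at hv hw
      have hv' : ¬ cptN S v.1 = v.1 := fun h => hv.2 (Fin.ext h)
      have hw' : ¬ cptN S w.1 = w.1 := fun h => hw.2 (Fin.ext h)
      rw [cptN_eq_self_iff] at hv' hw'
      push_neg at hv' hw'
      exact Fin.ext (by omega)
    · intro i hi
      have hin : i < n := by simpa using hS hi
      refine ⟨⟨i+1, by omega⟩, ?_, ?_⟩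
      · rw [mem_filter]
        refine ⟨mem_univ _, fun h => ?_⟩
        have h2 : cptN S (i+1) = i+1 := by
          have := congrArg Fin.val h
          simpa [leadF] using this
        rw [cptN_eq_self_iff] at h2
        simp at h2
        exact h2 hi
      · simp
  have := Finset.card_filter_add_card_filter_not
    (s := (univ : Finset (Fin (n+1)))) (p := fun v => leadF S v = v)
  rw [card_univ, Fintype.card_fin] at this
  have hle : S.card ≤ n := by
    calc S.card ≤ (range n).card := card_le_card hS
    _ = n := card_range n
  omega

include hS in
lemma cG_GS : cG (GS n S) = runs S := by
  rw [cG]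
  have hinj : Function.Injective
      (fun c : {c : (GS n S).ConnectedComponent //
          ∃ v w, (GS n S).Adj v w ∧ (GS n S).connectedComponentMk v = c} => phi hS c.1) :=
    fun c d h => Subtype.ext (phi_inj hS h)
  rw [← Nat.card_range_of_injective hinj]
  have hrange : Set.range (fun c : {c : (GS n S).ConnectedComponent //
          ∃ v w, (GS n S).Adj v w ∧ (GS n S).connectedComponentMk v = c} => phi hS c.1)
      = ↑(univ.filter (fun v : Fin (n+1) => v.1 ∈ S ∧ cptN S v.1 = v.1)) := by
    ext x
    simp only [Set.mem_range, mem_coe, mem_filter, mem_univ, true_and]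
    constructor
    · rintro ⟨⟨c, v, w, hadj, hmk⟩, rfl⟩
      subst hmk
      rw [phi_mk]
      exact ⟨adj_lead_mem hS hadj, cptN_idem S v.1⟩
    · rintro ⟨hxS, hfix⟩
      have hxn : x.1 < n := by simpa using hS hxS
      have hadj : (GS n S).Adj x ⟨x.1+1, by omega⟩ := by
        rw [GS_adj]
        refine ⟨⟨x.1, hxS, ?_⟩, ?_⟩
        · rw [ge, Sym2.eq_iff]
          left
          constructor <;> (apply Fin.ext; rw [ve_eq (by omega)]; try omega)
        · intro hc; have := congrArg Fin.val hc; simp at this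
      refine ⟨⟨(GS n S).connectedComponentMk x, x, ⟨x.1+1, by omega⟩, hadj, rfl⟩, ?_⟩
      rw [phi_mk]
      exact Fin.ext hfix
  rw [hrange, Nat.card_coe_set_eq, Set.ncard_coe_finset, runs]
  apply Finset.card_bij (fun (v : Fin (n+1)) _ => v.1)
  · intro v hv
    rw [mem_filter] at hv
    rw [mem_filter]
    have := hv.2.2
    rw [cptN_eq_self_iff] at this
    exact ⟨hv.2.1, this⟩
  · intro v _ w _ h
    exact Fin.ext h
  · intro i hi
    rw [mem_filter] at hi
    have hin : i < n := by simpa using hS hi.1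
    refine ⟨⟨i, by omega⟩, ?_, rfl⟩
    rw [mem_filter]
    exact ⟨mem_univ _, hi.1, (cptN_eq_self_iff S i).mpr hi.2⟩

end GS

lemma ccp_pathG_zero : ccp (pathG 0) = 1 := by
  have he : edgeFinset' (pathG 0) = ∅ := by
    apply Finset.eq_empty_of_forall_notMem
    intro e
    induction e with
    | _ a b => exact Fin.elim0 a
  rw [ccp, he, powerset_empty, sum_singleton]
  haveI : IsEmpty (SimpleGraph.fromEdgeSet
      ((∅ : Finset (Sym2 (Fin 0))) : Set (Sym2 (Fin 0)))).ConnectedComponent := by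
    constructor
    intro c
    exact SimpleGraph.ConnectedComponent.ind (fun v => v.elim0) c
  rw [kG, Nat.card_of_isEmpty, cG, Nat.card_of_isEmpty]
  simp

lemma ccp_pathG_succ (n : ℕ) : ccp (pathG (n+1)) = T (n+1) := by
  rw [ccp, T, show n+1-1 = n from rfl]
  symm
  apply Finset.sum_nbij' (fun S => S.image (ge n)) (fun A => A.image (fe n))
  · intro S hS
    rw [mem_powerset] at hS ⊢
    intro e he
    rw [mem_image] at he
    obtain ⟨i, hi, rfl⟩ := he
    rw [mem_edge]
    exact ⟨i, by simpa using hS hi, rfl⟩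
  · intro A hA
    rw [mem_powerset] at hA ⊢
    intro i hi
    rw [mem_image] at hi
    obtain ⟨e, he, rfl⟩ := hi
    obtain ⟨j, hj, rfl⟩ := (mem_edge e).mp (hA he)
    rw [fe_ge hj, mem_range]
    exact hj
  · intro S hS
    rw [mem_powerset] at hS
    rw [image_image]
    conv_rhs => rw [← Finset.image_id (s := S)]
    apply Finset.image_congr
    intro i hi
    exact fe_ge (by simpa using hS hi)
  · intro A hA
    rw [mem_powerset] at hA
    rw [image_image]
    conv_rhs => rw [← Finset.image_id (s := A)]
    apply Finset.image_congr
    intro e he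
    obtain ⟨j, hj, rfl⟩ := (mem_edge e).mp (hA he)
    simp only [Function.comp_apply, fe_ge hj, id_eq]
  · intro S hS
    rw [mem_powerset] at hS
    have hS' : S ⊆ range n := by intro i hi; exact hS hi
    have hcard : (S.image (ge n)).card = S.card := by
      apply Finset.card_image_of_injOn
      intro i hi j hj hij
      have h1 := fe_ge (by simpa using hS' hi)
      have h2 := fe_ge (by simpa using hS' hj)
      rw [← h1, ← h2, hij]
    have hkG := kG_GS hS'
    have hcG := cG_GS hS'
    rw [GS] at hkG hcG
    rw [hcard, hkG, hcG]


lemma ccp_T (n : ℕ) : ccp (pathG n) = T n := by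
  cases n with
  | zero => rw [ccp_pathG_zero, T_zero]
  | succ m => rw [ccp_pathG_succ]

lemma T_eq_F (n : ℕ) : T n = F n := by
  induction n using Nat.strong_induction_on with
  | _ n ih =>
    rcases n with _ | _ | m
    · rw [T_zero, F_zero]
    · rw [T_one, F_one]
    · rw [T_rec, F_rec, ih (m+1) (by omega), ih m (by omega)]

/-- The covered components polynomial of the path `Pₙ` satisfies, for
`n > 1`, the recurrence `C(Pₙ) = (x+y)·C(Pₙ₋₁) + (xyz − xy)·C(Pₙ₋₂)` with `C(P₀) = 1`
and `C(P₁) = x`, and the explicit formula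
`C(Pₙ) = xⁿ + ∑_{i=1}^{n−1} x^{n−i} yⁱ ∑_{k=1}^{min(i,n−i)} C(i−1,k−1)·C(n−i,k)·z^k`. -/
theorem ccp_path :
    (∀ n : ℕ, 1 < n →
      ccp (pathG n) = (X 0 + X 1) * ccp (pathG (n - 1)) +
        (X 0 * X 1 * X 2 - X 0 * X 1) * ccp (pathG (n - 2))) ∧
    ccp (pathG 0) = 1 ∧ ccp (pathG 1) = X 0 ∧
    (∀ n : ℕ, ccp (pathG n) =
      X 0 ^ n + ∑ i ∈ Finset.Icc 1 (n - 1), X 0 ^ (n - i) * X 1 ^ i *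
        ∑ k ∈ Finset.Icc 1 (min i (n - i)),
          (((i - 1).choose (k - 1) * (n - i).choose k : ℕ) : MvPolynomial (Fin 3) ℤ) *
            X 2 ^ k) := by
  refine ⟨?_, ?_, ?_, ?_⟩
  · intro n hn
    obtain ⟨m, rfl⟩ : ∃ m, n = m + 2 := ⟨n - 2, by omega⟩
    rw [show m+2-1 = m+1 from rfl, show m+2-2 = m from rfl]
    rw [ccp_T, ccp_T, ccp_T, T_rec]
  · rw [ccp_T, T_zero]
  · rw [ccp_T, T_one]
  · intro n
    rw [ccp_T, T_eq_F, F_formula]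

end
end

section
/- Let Cₙ be the cycle with n vertices, n > 2. Then its covered components polynomial satisfies the explicit formula C(Cₙ,x,y,z) = xⁿ + ∑_{i=1}^{n−1} (n/(n−i))·x^{n−i} y^{i} ∑_{k=1}^{min(i, n−i)} C(i−1,k−1)·C(n−i,k)·z^{k} + x yⁿ z, where C(a,b) denotes the binomial coefficient. In particular, the coefficient of x^{n−k} y^{k} z^{k} in C(Cₙ) equals (n/(n−k))·C(n−k, k), the number of k-matchings of Cₙ. -/
open MvPolynomial Finset
open scoped Classical

noncomputable section

variable {V : Type}

/-- `Cₙ`: the cycle with `n` vertices `0, 1, …, n−1` and edges `{i, i+1 mod n}`. -/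
def cycleG (n : ℕ) : SimpleGraph (Fin n) :=
  SimpleGraph.fromRel (fun i j => ((i : ℕ) + 1) % n = (j : ℕ))

/-- The number of `k`-matchings of the cycle `Cₙ`: edge subsets of size `k` consisting
of pairwise non-adjacent edges. -/
def numMatchings (n k : ℕ) : ℕ :=
  ((edgeFinset' (cycleG n)).powerset.filter (fun (A : Finset (Sym2 (Fin n))) =>
    A.card = k ∧ ∀ e ∈ A, ∀ f ∈ A, e ≠ f → ∀ v : Fin n, ¬(v ∈ e ∧ v ∈ f))).card


namespace CCPAux

open Fin.NatCast Fin.CommRing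


variable {n : ℕ}

/-- edge j of the cycle -/
def EE (n : ℕ) [NeZero n] : Fin n → Sym2 (Fin n) := fun j => s(j, j + 1)

section basic
variable [NeZero n]

lemma one_ne_zero' (hn : 2 < n) : (1 : Fin n) ≠ 0 := by
  have h1 : ((1 : Fin n) : ℕ) = 1 % n := Fin.val_one' n
  intro h
  rw [Fin.ext_iff] at h
  rw [h1, Nat.mod_eq_of_lt (by omega : 1 < n)] at h
  simpa using h

lemma self_ne_add_one (hn : 2 < n) (v : Fin n) : v ≠ v + 1 := by
  intro h
  exact one_ne_zero' hn (left_eq_add.mp h)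

lemma two_ne_zero' (hn : 2 < n) : (2 : Fin n) ≠ 0 := by
  have hv : ((2 : Fin n) : ℕ) = 2 % n := by
    have h : ((2 : ℕ) : Fin n) = (2 : Fin n) := by norm_cast
    rw [← h, Fin.val_natCast]
  intro h
  rw [Fin.ext_iff] at h
  rw [hv, Nat.mod_eq_of_lt hn] at h
  simpa using h

lemma EE_inj (hn : 2 < n) : Function.Injective (EE n) := by
  intro a b hab
  rcases Sym2.eq_iff.mp hab with ⟨h1, _⟩ | ⟨h1, h2⟩
  · exact h1
  · exfalso
    have hb : b = b + (1 + 1) := by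
      conv_lhs => rw [← h2, h1, add_assoc]
    have := left_eq_add.mp hb
    rw [one_add_one_eq_two] at this
    exact two_ne_zero' hn this

end basic


section graphs
variable [NeZero n]

lemma cycle_adj (hn : 2 < n) {u v : Fin n} :
    (cycleG n).Adj u v ↔ u ≠ v ∧ (u + 1 = v ∨ v + 1 = u) := by
  have key : ∀ a b : Fin n, (((a : ℕ) + 1) % n = (b : ℕ)) ↔ a + 1 = b := by
    intro a b
    rw [Fin.ext_iff, Fin.add_def, Fin.val_one' n, Nat.mod_eq_of_lt (by omega : 1 < n)]
  constructor
  · rintro ⟨hne, h | h⟩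
    · exact ⟨hne, Or.inl ((key u v).mp h)⟩
    · exact ⟨hne, Or.inr ((key v u).mp h)⟩
  · rintro ⟨hne, h | h⟩
    · exact ⟨hne, Or.inl ((key u v).mpr h)⟩
    · exact ⟨hne, Or.inr ((key v u).mpr h)⟩

lemma cycle_adj_succ (hn : 2 < n) (v : Fin n) : (cycleG n).Adj v (v + 1) :=
  (cycle_adj hn).mpr ⟨self_ne_add_one hn v, Or.inl rfl⟩

lemma edgeFinset'_cycle (hn : 2 < n) :
    edgeFinset' (cycleG n) = Finset.univ.image (EE n) := by
  ext e
  induction e using Sym2.ind with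
  | _ u v =>
    simp only [edgeFinset', Set.Finite.mem_toFinset, SimpleGraph.mem_edgeSet,
      Finset.mem_image, Finset.mem_univ, true_and]
    constructor
    · intro h
      rcases (cycle_adj hn).mp h with ⟨hne, h1 | h1⟩
      · exact ⟨u, by rw [EE, h1]⟩
      · exact ⟨v, by rw [EE, h1, Sym2.eq_swap]⟩
    · rintro ⟨j, hj⟩
      rcases Sym2.eq_iff.mp hj.symm with ⟨h1, h2⟩ | ⟨h1, h2⟩
      · rw [h1, h2]; exact cycle_adj_succ hn j
      · rw [h1, h2]; exact (cycle_adj_succ hn j).symm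

/-- spanning subgraph of the cycle given by the edge-index set `S` -/
def GS (S : Finset (Fin n)) : SimpleGraph (Fin n) :=
  SimpleGraph.fromEdgeSet ((S.image (EE n) : Finset (Sym2 (Fin n))) : Set (Sym2 (Fin n)))

lemma GS_adj (hn : 2 < n) {S : Finset (Fin n)} {u v : Fin n} :
    (GS S).Adj u v ↔ u ≠ v ∧ ((u ∈ S ∧ v = u + 1) ∨ (v ∈ S ∧ u = v + 1)) := by
  rw [GS, SimpleGraph.fromEdgeSet_adj]
  simp only [Finset.coe_image, Set.mem_image, Finset.mem_coe]
  constructor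
  · rintro ⟨⟨j, hj, hje⟩, hne⟩
    refine ⟨hne, ?_⟩
    rcases Sym2.eq_iff.mp hje with ⟨h1, h2⟩ | ⟨h1, h2⟩
    · exact Or.inl ⟨h1 ▸ hj, (h1 ▸ h2 : u + 1 = v).symm⟩
    · exact Or.inr ⟨h1 ▸ hj, (h1 ▸ h2 : v + 1 = u).symm⟩
  · rintro ⟨hne, ⟨hu, rfl⟩ | ⟨hv, rfl⟩⟩
    · exact ⟨⟨u, hu, rfl⟩, hne⟩
    · exact ⟨⟨v, hv, Sym2.eq_swap⟩, hne⟩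

lemma GS_adj_succ (hn : 2 < n) {S : Finset (Fin n)} {v : Fin n} (hv : v ∈ S) :
    (GS S).Adj v (v + 1) :=
  (GS_adj hn).mpr ⟨self_ne_add_one hn v, Or.inl ⟨hv, rfl⟩⟩

end graphs


section startfun
variable [NeZero n]

lemma block_ex {S : Finset (Fin n)} (hS : S ≠ Finset.univ) (v : Fin n) :
    ∃ t : ℕ, v - 1 - (t : Fin n) ∉ S := by
  obtain ⟨m, hm⟩ : ∃ m, m ∉ S := by
    by_contra h
    push_neg at h
    exact hS (Finset.eq_univ_iff_forall.2 h)
  refine ⟨(v - 1 - m).val, ?_⟩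
  rw [Fin.cast_val_eq_self, sub_sub_cancel]
  exact hm

/-- number of backward steps from `v` to the start of its run -/
def tv {S : Finset (Fin n)} (hS : S ≠ Finset.univ) (v : Fin n) : ℕ :=
  Nat.find (block_ex hS v)

/-- start of the run containing `v` -/
def sv {S : Finset (Fin n)} (hS : S ≠ Finset.univ) (v : Fin n) : Fin n :=
  v - ((tv hS v : ℕ) : Fin n)

variable {S : Finset (Fin n)} (hS : S ≠ Finset.univ)
include hS

lemma tv_spec (v : Fin n) : v - 1 - ((tv hS v : ℕ) : Fin n) ∉ S :=
  Nat.find_spec (block_ex hS v)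

lemma tv_min {v : Fin n} {r : ℕ} (h : r < tv hS v) : v - 1 - (r : Fin n) ∈ S := by
  have := Nat.find_min (block_ex hS v) h
  simpa using this

lemma sv_sub_one_not_mem (v : Fin n) : sv hS v - 1 ∉ S := by
  have := tv_spec hS v
  rwa [sub_right_comm] at this

lemma tv_eq_zero {v : Fin n} (h : v - 1 ∉ S) : tv hS v = 0 := by
  rw [tv, Nat.find_eq_zero]
  simpa using h

lemma sv_eq_self {v : Fin n} (h : v - 1 ∉ S) : sv hS v = v := by
  rw [sv, tv_eq_zero hS h]
  simp

lemma tv_succ {v : Fin n} (hv : v ∈ S) : tv hS (v + 1) = tv hS v + 1 := by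
  rw [tv, Nat.find_eq_iff]
  constructor
  · have h := tv_spec hS v
    have : v + 1 - 1 - ((tv hS v + 1 : ℕ) : Fin n) = v - 1 - ((tv hS v : ℕ) : Fin n) := by
      push_cast
      ring
    rw [this]
    exact h
  · intro k hk
    simp only [not_not]
    match k with
    | 0 => simpa using hv
    | (r + 1) =>
      have hr : r < tv hS v := by omega
      have h := tv_min hS hr
      have : v + 1 - 1 - ((r + 1 : ℕ) : Fin n) = v - 1 - ((r : ℕ) : Fin n) := by
        push_cast
        ring
      rw [this]
      exact h

lemma sv_succ {v : Fin n} (hv : v ∈ S) : sv hS (v + 1) = sv hS v := by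
  rw [sv, sv, tv_succ hS hv]
  push_cast
  ring

lemma tv_pred {v : Fin n} (hv : v - 1 ∈ S) : tv hS v = tv hS (v - 1) + 1 := by
  have := tv_succ hS hv
  rwa [sub_add_cancel] at this

lemma sv_mem {v : Fin n} (hv : v ∈ S) : sv hS v ∈ S := by
  rcases Nat.eq_zero_or_pos (tv hS v) with h | h
  · rw [sv, h]
    simpa using hv
  · obtain ⟨t, ht⟩ := Nat.exists_eq_succ_of_ne_zero (Nat.pos_iff_ne_zero.mp h)
    have hm := tv_min hS (show t < tv hS v by omega)
    have : sv hS v = v - 1 - ((t : ℕ) : Fin n) := by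
      rw [sv, ht]
      push_cast
      ring
    rw [this]
    exact hm

lemma reach_sv (hn : 2 < n) (v : Fin n) : (GS S).Reachable v (sv hS v) := by
  suffices h : ∀ (t : ℕ) (v : Fin n), tv hS v = t → (GS S).Reachable v (sv hS v) from
    h (tv hS v) v rfl
  intro t
  induction t with
  | zero =>
    intro v ht
    rw [sv, ht]
    simpa using SimpleGraph.Reachable.refl v
  | succ t ih =>
    intro v ht
    have h0 : v - 1 ∈ S := by
      have := tv_min hS (show 0 < tv hS v by omega)
      simpa using this
    have htp : tv hS (v - 1) = t := by
      have := tv_pred hS h0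
      omega
    have hadj : (GS S).Adj (v - 1) v := by
      have := GS_adj_succ hn h0
      rwa [sub_add_cancel] at this
    have hsv : sv hS (v - 1) = sv hS v := by
      rw [sv, sv, htp, ht]
      push_cast
      ring
    exact (hadj.symm.reachable).trans (hsv ▸ ih (v - 1) htp)

lemma adj_sv (hn : 2 < n) {u w : Fin n} (h : (GS S).Adj u w) : sv hS u = sv hS w := by
  rcases (GS_adj hn).mp h with ⟨hne, ⟨hu, rfl⟩ | ⟨hw, rfl⟩⟩
  · exact (sv_succ hS hu).symm
  · exact sv_succ hS hw

lemma reachable_sv (hn : 2 < n) {u w : Fin n} (h : (GS S).Reachable u w) :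
    sv hS u = sv hS w := by
  obtain ⟨p⟩ := h
  induction p with
  | nil => rfl
  | cons hadj _ ih => exact (adj_sv hS hn hadj).trans ih

/-- the representative start vertex of a component -/
def compMap (hn : 2 < n) : (GS S).ConnectedComponent → Fin n :=
  SimpleGraph.ConnectedComponent.lift (sv hS)
    (fun _ _ p _ => reachable_sv hS hn ⟨p⟩)

@[simp] lemma compMap_mk (hn : 2 < n) (v : Fin n) :
    compMap hS hn ((GS S).connectedComponentMk v) = sv hS v := rfl

/-- components of `GS S` are in bijection with run starts -/
def kequiv (hn : 2 < n) : (GS S).ConnectedComponent ≃ {v : Fin n // v - 1 ∉ S} where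
  toFun c := ⟨compMap hS hn c, by
    induction c using SimpleGraph.ConnectedComponent.ind with
    | _ v => exact sv_sub_one_not_mem hS v⟩
  invFun v := (GS S).connectedComponentMk v.1
  left_inv c := by
    induction c using SimpleGraph.ConnectedComponent.ind with
    | _ v =>
      exact SimpleGraph.ConnectedComponent.sound (reach_sv hS hn v).symm
  right_inv v := Subtype.ext (sv_eq_self hS v.2)

/-- covered components of `GS S` are in bijection with run starts that carry an edge -/
def cequiv (hn : 2 < n) :
    {c : (GS S).ConnectedComponent //
        ∃ v w, (GS S).Adj v w ∧ (GS S).connectedComponentMk v = c} ≃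
      {v : Fin n // v ∈ S ∧ v - 1 ∉ S} where
  toFun c := ⟨compMap hS hn c.1, by
    obtain ⟨v, w, hadj, hmk⟩ := c.2
    rw [← hmk]
    refine ⟨?_, sv_sub_one_not_mem hS v⟩
    rcases (GS_adj hn).mp hadj with ⟨hne, ⟨hu, rfl⟩ | ⟨hw, rfl⟩⟩
    · exact sv_mem hS hu
    · show sv hS _ ∈ S
      rw [adj_sv hS hn hadj]
      exact sv_mem hS hw⟩
  invFun v := ⟨(GS S).connectedComponentMk v.1, v.1, v.1 + 1, GS_adj_succ hn v.2.1, rfl⟩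
  left_inv c := by
    obtain ⟨v, w, hadj, hmk⟩ := c.2
    refine Subtype.ext ?_
    show (GS S).connectedComponentMk (compMap hS hn c.1) = c.1
    rw [← hmk]
    show (GS S).connectedComponentMk (sv hS v) = _
    exact SimpleGraph.ConnectedComponent.sound (reach_sv hS hn v).symm
  right_inv v := Subtype.ext (sv_eq_self hS v.2.2)

omit hS in
/-- number of blocks (= covered components) of the edge-index set `S` -/
def bS (S : Finset (Fin n)) : ℕ := (S.filter (fun j => j - 1 ∉ S)).card

lemma kG_GS (hn : 2 < n) : kG (GS S) = n - S.card := by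
  rw [kG, Nat.card_congr (kequiv hS hn), Nat.card_eq_fintype_card,
    Fintype.card_subtype]
  have hbij : (Finset.univ.filter (fun v : Fin n => v - 1 ∉ S)).card = Sᶜ.card := by
    refine Finset.card_bij' (fun v _ => v - 1) (fun v _ => v + 1) ?_ ?_ ?_ ?_
    · intro a ha
      simp only [Finset.mem_filter] at ha
      simpa using ha.2
    · intro a ha
      simp only [Finset.mem_compl] at ha
      simp only [Finset.mem_filter, Finset.mem_univ, true_and, add_sub_cancel_right]
      exact ha
    · intro a _
      exact sub_add_cancel a 1
    · intro a _
      exact add_sub_cancel_right a 1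
  rw [hbij, Finset.card_compl, Fintype.card_fin]

lemma cG_GS (hn : 2 < n) : cG (GS S) = bS S := by
  rw [cG, Nat.card_congr (cequiv hS hn), Nat.card_eq_fintype_card,
    Fintype.card_subtype, bS]
  congr 1
  ext v
  simp [Finset.mem_filter, and_comm]

end startfun


section univcase
variable [NeZero n]

lemma reach_zero_univ (hn : 2 < n) (t : ℕ) :
    (GS (Finset.univ : Finset (Fin n))).Reachable 0 ((t : ℕ) : Fin n) := by
  induction t with
  | zero =>
    simp only [Nat.cast_zero]
    exact SimpleGraph.Reachable.refl 0
  | succ t ih =>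
    have hadj : (GS (Finset.univ : Finset (Fin n))).Adj ((t : ℕ) : Fin n)
        (((t + 1 : ℕ) : ℕ) : Fin n) := by
      have := GS_adj_succ hn (S := (Finset.univ : Finset (Fin n)))
        (v := ((t : ℕ) : Fin n)) (Finset.mem_univ _)
      convert this using 2
      push_cast
      ring
    exact ih.trans hadj.reachable

lemma reach_univ (hn : 2 < n) (v : Fin n) :
    (GS (Finset.univ : Finset (Fin n))).Reachable 0 v := by
  have := reach_zero_univ hn v.val
  rwa [Fin.cast_val_eq_self] at this

lemma comp_subsingleton (hn : 2 < n) :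
    Subsingleton ((GS (Finset.univ : Finset (Fin n))).ConnectedComponent) := by
  constructor
  intro a b
  induction a using SimpleGraph.ConnectedComponent.ind with
  | _ v =>
    induction b using SimpleGraph.ConnectedComponent.ind with
    | _ w =>
      exact SimpleGraph.ConnectedComponent.sound
        ((reach_univ hn v).symm.trans (reach_univ hn w))

lemma kG_univ (hn : 2 < n) : kG (GS (Finset.univ : Finset (Fin n))) = 1 := by
  rw [kG, Nat.card_eq_one_iff_unique]
  exact ⟨comp_subsingleton hn, ⟨(GS _).connectedComponentMk 0⟩⟩

lemma cG_univ (hn : 2 < n) : cG (GS (Finset.univ : Finset (Fin n))) = 1 := by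
  haveI := comp_subsingleton hn
  rw [cG, Nat.card_eq_one_iff_unique]
  refine ⟨⟨fun a b => Subtype.ext (Subsingleton.elim _ _)⟩,
    ⟨⟨(GS _).connectedComponentMk 0, 0, 1, ?_, rfl⟩⟩⟩
  have h := GS_adj_succ hn (S := (Finset.univ : Finset (Fin n))) (v := (0 : Fin n))
    (Finset.mem_univ _)
  have h01 : (0 : Fin n) + 1 = 1 := zero_add 1
  rwa [h01] at h

end univcase


section linear

/-- number of blocks of a finite set of naturals (all assumed `≥ 1`) -/
def lbc (T : Finset ℕ) : ℕ := (T.filter (fun t => t - 1 ∉ T)).card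

/-- sets of `i` naturals in `[1,m]` forming `k` blocks -/
def Lset (m i k : ℕ) : Finset (Finset ℕ) :=
  (Finset.Icc 1 m).powerset.filter (fun T => T.card = i ∧ lbc T = k)

lemma lbc_erase_of_pred_mem {T : Finset ℕ} {a : ℕ} (ha1 : 1 ≤ a)
    (hmax : ∀ t ∈ T, t ≤ a) (hpred : a - 1 ∈ T) : lbc (T.erase a) = lbc T := by
  unfold lbc
  congr 1
  ext t
  simp only [Finset.mem_filter, Finset.mem_erase]
  constructor
  · rintro ⟨⟨hta, htT⟩, hnb⟩
    refine ⟨htT, fun hc => hnb ⟨?_, hc⟩⟩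
    have := hmax t htT
    omega
  · rintro ⟨htT, hnb⟩
    have hta : t ≠ a := by
      rintro rfl
      exact hnb hpred
    exact ⟨⟨hta, htT⟩, fun hc => hnb hc.2⟩

lemma lbc_erase_of_pred_not_mem {T : Finset ℕ} {a : ℕ} (ha : a ∈ T) (ha1 : 1 ≤ a)
    (hmax : ∀ t ∈ T, t ≤ a) (hpred : a - 1 ∉ T) :
    lbc T = lbc (T.erase a) + 1 := by
  unfold lbc
  have hset : T.filter (fun t => t - 1 ∉ T) =
      insert a ((T.erase a).filter (fun t => t - 1 ∉ T.erase a)) := by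
    ext t
    simp only [Finset.mem_filter, Finset.mem_insert, Finset.mem_erase]
    constructor
    · rintro ⟨htT, hnb⟩
      rcases eq_or_ne t a with rfl | hta
      · exact Or.inl rfl
      · exact Or.inr ⟨⟨hta, htT⟩, fun hc => hnb hc.2⟩
    · rintro (rfl | ⟨⟨hta, htT⟩, hnb⟩)
      · exact ⟨ha, hpred⟩
      · refine ⟨htT, fun hc => hnb ⟨?_, hc⟩⟩
        have := hmax t htT
        omega
  rw [hset, Finset.card_insert_of_notMem]
  simp only [Finset.mem_filter, Finset.mem_erase]
  rintro ⟨⟨hc, _⟩, _⟩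
  exact hc rfl

lemma lbc_pos {T : Finset ℕ} (hT : T.Nonempty) (h1 : ∀ t ∈ T, 1 ≤ t) : 1 ≤ lbc T := by
  obtain ⟨t0, ht0, hmin⟩ := T.exists_min_image id hT
  have : t0 ∈ T.filter (fun t => t - 1 ∉ T) := by
    refine Finset.mem_filter.mpr ⟨ht0, fun hc => ?_⟩
    have h2 := hmin _ hc
    have h3 := h1 t0 ht0
    simp only [id] at h2
    omega
  have := Finset.card_pos.mpr ⟨t0, this⟩
  exact this


lemma mem_Lset {m i k : ℕ} {T : Finset ℕ} :
    T ∈ Lset m i k ↔ T ⊆ Finset.Icc 1 m ∧ T.card = i ∧ lbc T = k := by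
  simp [Lset, Finset.mem_filter, Finset.mem_powerset, and_assoc]

lemma X1_card {m i k : ℕ} (hi : 2 ≤ i) :
    ((Lset (m+1) i k).filter (fun T => m + 1 ∈ T ∧ m ∈ T)).card
      = ((Lset m (i-1) k).filter (fun T => m ∈ T)).card := by
  refine Finset.card_bij' (fun T _ => T.erase (m+1)) (fun T' _ => insert (m+1) T')
    ?_ ?_ ?_ ?_
  · intro T hT
    simp only [Finset.mem_filter, mem_Lset] at hT ⊢
    obtain ⟨⟨hsub, hcard, hlbc⟩, hm1, hm⟩ := hT
    have hmax : ∀ t ∈ T, t ≤ m + 1 := fun t ht => (Finset.mem_Icc.mp (hsub ht)).2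
    refine ⟨⟨?_, ?_, ?_⟩, ?_⟩
    · intro x hx
      obtain ⟨hx1, hx2⟩ := Finset.mem_erase.mp hx
      have := Finset.mem_Icc.mp (hsub hx2)
      simp only [Finset.mem_Icc]
      omega
    · rw [Finset.card_erase_of_mem hm1, hcard]
    · rw [lbc_erase_of_pred_mem (by omega) hmax (by simpa using hm), hlbc]
    · exact Finset.mem_erase.mpr ⟨by omega, hm⟩
  · intro T' hT'
    simp only [Finset.mem_filter, mem_Lset] at hT' ⊢
    obtain ⟨⟨hsub, hcard, hlbc⟩, hm⟩ := hT'
    have hnm : m + 1 ∉ T' := fun hc => by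
      have := (Finset.mem_Icc.mp (hsub hc)).2
      omega
    refine ⟨⟨?_, ?_, ?_⟩, Finset.mem_insert_self _ _, Finset.mem_insert_of_mem hm⟩
    · intro x hx
      rcases Finset.mem_insert.mp hx with rfl | hx2
      · simp only [Finset.mem_Icc]; omega
      · have := Finset.mem_Icc.mp (hsub hx2)
        simp only [Finset.mem_Icc]; omega
    · rw [Finset.card_insert_of_notMem hnm, hcard]; omega
    · have hmax : ∀ t ∈ insert (m+1) T', t ≤ m + 1 := by
        intro t ht
        rcases Finset.mem_insert.mp ht with rfl | ht2
        · omega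
        · have := (Finset.mem_Icc.mp (hsub ht2)).2; omega
      have := lbc_erase_of_pred_mem (a := m+1) (T := insert (m+1) T') (by omega) hmax
        (by simp only [Nat.add_sub_cancel]; exact Finset.mem_insert_of_mem hm)
      rw [Finset.erase_insert hnm] at this
      rw [← this, hlbc]
  · intro T hT
    simp only [Finset.mem_filter] at hT
    exact Finset.insert_erase hT.2.1
  · intro T' hT'
    simp only [Finset.mem_filter, mem_Lset] at hT'
    refine Finset.erase_insert (fun hc => ?_)
    have := (Finset.mem_Icc.mp (hT'.1.1 hc)).2
    omega

lemma X2_card {m i k : ℕ} (hi : 2 ≤ i) (hk : 2 ≤ k) :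
    ((Lset (m+1) i k).filter (fun T => m + 1 ∈ T ∧ m ∉ T)).card
      = ((Lset m (i-1) (k-1)).filter (fun T => m ∉ T)).card := by
  refine Finset.card_bij' (fun T _ => T.erase (m+1)) (fun T' _ => insert (m+1) T')
    ?_ ?_ ?_ ?_
  · intro T hT
    simp only [Finset.mem_filter, mem_Lset] at hT ⊢
    obtain ⟨⟨hsub, hcard, hlbc⟩, hm1, hm⟩ := hT
    have hmax : ∀ t ∈ T, t ≤ m + 1 := fun t ht => (Finset.mem_Icc.mp (hsub ht)).2
    have hpred : (m + 1) - 1 ∉ T := by simpa using hm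
    have herase := lbc_erase_of_pred_not_mem hm1 (by omega) hmax hpred
    refine ⟨⟨?_, ?_, ?_⟩, ?_⟩
    · intro x hx
      obtain ⟨hx1, hx2⟩ := Finset.mem_erase.mp hx
      have := Finset.mem_Icc.mp (hsub hx2)
      simp only [Finset.mem_Icc]
      omega
    · rw [Finset.card_erase_of_mem hm1, hcard]
    · omega
    · intro hc
      exact hm (Finset.mem_erase.mp hc).2
  · intro T' hT'
    simp only [Finset.mem_filter, mem_Lset] at hT' ⊢
    obtain ⟨⟨hsub, hcard, hlbc⟩, hm⟩ := hT'
    have hnm : m + 1 ∉ T' := fun hc => by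
      have := (Finset.mem_Icc.mp (hsub hc)).2
      omega
    have hmax : ∀ t ∈ insert (m+1) T', t ≤ m + 1 := by
      intro t ht
      rcases Finset.mem_insert.mp ht with rfl | ht2
      · omega
      · have := (Finset.mem_Icc.mp (hsub ht2)).2; omega
    have hpred : (m + 1) - 1 ∉ insert (m+1) T' := by
      simp only [Nat.add_sub_cancel, Finset.mem_insert]
      push_neg
      exact ⟨by omega, hm⟩
    have herase := lbc_erase_of_pred_not_mem (Finset.mem_insert_self _ _) (by omega)
      hmax hpred
    rw [Finset.erase_insert hnm] at herase
    refine ⟨⟨?_, ?_, ?_⟩, Finset.mem_insert_self _ _, ?_⟩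
    · intro x hx
      rcases Finset.mem_insert.mp hx with rfl | hx2
      · simp only [Finset.mem_Icc]; omega
      · have := Finset.mem_Icc.mp (hsub hx2)
        simp only [Finset.mem_Icc]; omega
    · rw [Finset.card_insert_of_notMem hnm, hcard]; omega
    · omega
    · simp only [Finset.mem_insert]
      push_neg
      exact ⟨by omega, hm⟩
  · intro T hT
    simp only [Finset.mem_filter] at hT
    exact Finset.insert_erase hT.2.1
  · intro T' hT'
    simp only [Finset.mem_filter, mem_Lset] at hT'
    refine Finset.erase_insert (fun hc => ?_)
    have := (Finset.mem_Icc.mp (hT'.1.1 hc)).2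
    omega

lemma X2_card_one {m i : ℕ} (hi : 2 ≤ i) :
    ((Lset (m+1) i 1).filter (fun T => m + 1 ∈ T ∧ m ∉ T)).card = 0 := by
  rw [Finset.card_eq_zero, Finset.eq_empty_iff_forall_notMem]
  intro T hT
  simp only [Finset.mem_filter, mem_Lset] at hT
  obtain ⟨⟨hsub, hcard, hlbc⟩, hm1, hm⟩ := hT
  have hmax : ∀ t ∈ T, t ≤ m + 1 := fun t ht => (Finset.mem_Icc.mp (hsub ht)).2
  have hpred : (m + 1) - 1 ∉ T := by simpa using hm
  have herase := lbc_erase_of_pred_not_mem hm1 (by omega) hmax hpred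
  have h0 : lbc (T.erase (m+1)) = 0 := by omega
  have hne : (T.erase (m+1)).Nonempty := by
    rw [← Finset.card_pos, Finset.card_erase_of_mem hm1, hcard]
    omega
  have := lbc_pos hne (fun t ht => by
    have := Finset.mem_Icc.mp (hsub (Finset.mem_erase.mp ht).2)
    omega)
  omega

lemma Bset_eq {m i k : ℕ} :
    (Lset (m+1) i k).filter (fun T => m + 1 ∉ T) = Lset m i k := by
  ext T
  simp only [Finset.mem_filter, mem_Lset]
  constructor
  · rintro ⟨⟨hsub, h2, h3⟩, hnm⟩
    refine ⟨fun x hx => ?_, h2, h3⟩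
    have := Finset.mem_Icc.mp (hsub hx)
    have hxne : x ≠ m + 1 := fun hc => hnm (hc ▸ hx)
    simp only [Finset.mem_Icc]
    omega
  · rintro ⟨hsub, h2, h3⟩
    have hnm : m + 1 ∉ T := fun hc => by
      have := (Finset.mem_Icc.mp (hsub hc)).2
      omega
    refine ⟨⟨fun x hx => ?_, h2, h3⟩, hnm⟩
    have := Finset.mem_Icc.mp (hsub hx)
    simp only [Finset.mem_Icc]
    omega

lemma Lset_empty_of_large {m i k : ℕ} (him : m < i) : Lset m i k = ∅ := by
  rw [Finset.eq_empty_iff_forall_notMem]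
  intro T hT
  rw [mem_Lset] at hT
  have := Finset.card_le_card hT.1
  rw [hT.2.1, Nat.card_Icc] at this
  omega

lemma lin_count : ∀ (m i k : ℕ), 1 ≤ i → i ≤ m → 1 ≤ k →
    ((Lset m i k).filter (fun T => m ∈ T)).card
        = (i-1).choose (k-1) * (m-i).choose (k-1)
    ∧ ((Lset m i k).filter (fun T => m ∉ T)).card
        = (i-1).choose (k-1) * (m-i).choose k := by
  intro m
  induction m with
  | zero => intro i k hi him hk; omega
  | succ m ih =>
    intro i k hi him hk
    constructor
    · -- sets containing the top element m+1
      rcases eq_or_lt_of_le hi with hi1 | hi2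
      · -- i = 1 : only T = {m+1}
        rw [← hi1]
        have hone : ((Lset (m+1) 1 k).filter (fun T => m + 1 ∈ T))
            = if k = 1 then {({m+1} : Finset ℕ)} else ∅ := by
          ext T
          simp only [Lset, Finset.mem_filter, Finset.mem_powerset]
          constructor
          · rintro ⟨⟨hsub, hcard, hlbc⟩, hmem⟩
            have hT : T = {m+1} := by
              obtain ⟨a, ha⟩ := Finset.card_eq_one.mp hcard
              rw [ha] at hmem ⊢
              rw [Finset.mem_singleton.mp hmem]
            have hl : lbc T = 1 := by
              rw [hT, lbc]
              rw [Finset.filter_singleton]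
              rw [if_pos]
              · simp
              · simp only [Finset.mem_singleton]
                omega
            rw [hl] at hlbc
            rw [if_pos hlbc.symm]
            simpa using hT
          · intro hT
            by_cases hk1 : k = 1
            · rw [if_pos hk1] at hT
              rw [Finset.mem_singleton.mp hT]
              subst hk1
              refine ⟨⟨?_, by simp, ?_⟩, by simp⟩
              · intro x hx
                rw [Finset.mem_singleton.mp hx]
                simp only [Finset.mem_Icc]
                omega
              · rw [lbc, Finset.filter_singleton, if_pos]
                · simp
                · simp only [Finset.mem_singleton]
                  omega
            · rw [if_neg hk1] at hT
              simp at hT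
        rw [hone]
        by_cases hk1 : k = 1
        · subst hk1
          simp
        · rw [if_neg hk1]
          have : (0:ℕ).choose (k-1) = 0 := by
            rw [Nat.choose_eq_zero_of_lt]
            omega
          simp [this]
      · -- i ≥ 2 : split on whether m ∈ T
        have hsplit : ((Lset (m+1) i k).filter (fun T => m + 1 ∈ T)).card
            = ((Lset (m+1) i k).filter (fun T => m + 1 ∈ T ∧ m ∈ T)).card
            + ((Lset (m+1) i k).filter (fun T => m + 1 ∈ T ∧ m ∉ T)).card := by
          have h := Finset.card_filter_add_card_filter_not
            (s := (Lset (m+1) i k).filter (fun T => m + 1 ∈ T)) (p := fun T => m ∈ T)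
          rw [Finset.filter_filter, Finset.filter_filter] at h
          exact h.symm
        rw [hsplit, X1_card (by omega)]
        rcases eq_or_lt_of_le hk with hk1 | hk2
        · -- k = 1
          rw [← hk1, X2_card_one (by omega)]
          obtain ⟨hA, _⟩ := ih (i-1) 1 (by omega) (by omega) le_rfl
          rw [hA]
          simp
        · -- k ≥ 2
          obtain ⟨b, rfl⟩ : ∃ b, k = b + 2 := ⟨k - 2, by omega⟩
          obtain ⟨a, rfl⟩ : ∃ a, i = a + 2 := ⟨i - 2, by omega⟩
          rw [X2_card (by omega) (by omega)]
          obtain ⟨hA, _⟩ := ih (a + 2 - 1) (b + 2) (by omega) (by omega) (by omega)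
          obtain ⟨_, hB⟩ := ih (a + 2 - 1) (b + 2 - 1) (by omega) (by omega) (by omega)
          rw [hA, hB]
          have e1 : a + 2 - 1 - 1 = a := by omega
          have e2 : a + 2 - 1 = a + 1 := by omega
          have e3 : b + 2 - 1 - 1 = b := by omega
          have e4 : b + 2 - 1 = b + 1 := by omega
          have e5 : m - (a + 1) = m + 1 - (a + 2) := by omega
          rw [e1, e2, e3, e4, e5]
          have pascal : (a + 1).choose (b + 1) = a.choose b + a.choose (b + 1) :=
            Nat.choose_succ_succ a b
          rw [pascal]
          ring
    · -- sets not containing the top element m+1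
      rw [Bset_eq]
      rcases Nat.lt_or_ge m i with him2 | him2
      · rw [Lset_empty_of_large him2]
        simp only [Finset.card_empty]
        have h0 : (m + 1 - i).choose k = 0 := by
          rw [show m + 1 - i = 0 by omega]
          exact Nat.choose_eq_zero_of_lt (by omega)
        rw [h0, mul_zero]
      · have hpart := Finset.card_filter_add_card_filter_not
          (s := Lset m i k) (p := fun T => m ∈ T)
        obtain ⟨hA, hB⟩ := ih i k hi him2 hk
        rw [← hpart, hA, hB]
        obtain ⟨b, rfl⟩ : ∃ b, k = b + 1 := ⟨k - 1, by omega⟩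
        have e2 : m + 1 - i = (m - i) + 1 := by omega
        rw [e2]
        have pascal : (m - i + 1).choose (b + 1)
            = (m - i).choose b + (m - i).choose (b + 1) :=
          Nat.choose_succ_succ (m - i) b
        rw [pascal]
        have e3 : b + 1 - 1 = b := by omega
        rw [e3]
        ring

end linear


lemma Lset_card {m i k : ℕ} (hi : 1 ≤ i) (him : i ≤ m) (hk : 1 ≤ k) :
    (Lset m i k).card = (i-1).choose (k-1) * ((m-i)+1).choose k := by
  have hpart := Finset.card_filter_add_card_filter_not
    (s := Lset m i k) (p := fun T => m ∈ T)
  obtain ⟨hA, hB⟩ := lin_count m i k hi him hk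
  rw [← hpart, hA, hB]
  obtain ⟨b, rfl⟩ : ∃ b, k = b + 1 := ⟨k - 1, by omega⟩
  have pascal : (m - i + 1).choose (b + 1)
      = (m - i).choose b + (m - i).choose (b + 1) :=
    Nat.choose_succ_succ (m - i) b
  rw [pascal]
  have e3 : b + 1 - 1 = b := by omega
  rw [e3]
  ring

section cyclic
variable [NeZero n]

/-- subsets of `Fin n` (edge-index sets) with `i` elements forming `k` cyclic blocks -/
def Sfin (n : ℕ) [NeZero n] (i k : ℕ) : Finset (Finset (Fin n)) :=
  Finset.univ.filter (fun S => S.card = i ∧ bS S = k)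

/-- transfer a subset avoiding `j` to a linear subset of `[1, n-1]` -/
def Phi (j : Fin n) (S : Finset (Fin n)) : Finset ℕ :=
  (Finset.Icc 1 (n-1)).filter (fun t => j + ((t : ℕ) : Fin n) ∈ S)

lemma cast_inj_aux (hn : 2 < n) {t t' : ℕ} (ht : t ≤ n - 1) (ht' : t' ≤ n - 1)
    (h : ((t : ℕ) : Fin n) = ((t' : ℕ) : Fin n)) : t = t' := by
  have h1 : t % n = t' % n := by
    have := congrArg Fin.val h
    simpa [Fin.val_natCast] using this
  rwa [Nat.mod_eq_of_lt (by omega), Nat.mod_eq_of_lt (by omega)] at h1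

lemma cast_ne_zero_aux (hn : 2 < n) {t : ℕ} (h1 : 1 ≤ t) (h2 : t ≤ n - 1) :
    ((t : ℕ) : Fin n) ≠ 0 := by
  intro hc
  have := congrArg Fin.val hc
  simp only [Fin.val_natCast, Fin.val_zero] at this
  rw [Nat.mod_eq_of_lt (by omega)] at this
  omega

lemma val_sub_aux (hn : 2 < n) {s j : Fin n} (hne : s ≠ j) :
    1 ≤ (s - j).val ∧ (s - j).val ≤ n - 1 ∧ j + (((s - j).val : ℕ) : Fin n) = s := by
  have hne0 : s - j ≠ 0 := sub_ne_zero.mpr hne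
  have h1 : 1 ≤ (s - j).val := by
    rcases Nat.eq_zero_or_pos (s - j).val with h | h
    · exact absurd (Fin.ext h : s - j = 0) hne0
    · exact h
  refine ⟨h1, by omega, ?_⟩
  rw [Fin.cast_val_eq_self]
  ring

/-- block starts correspond under the transfer -/
lemma block_iff_aux (hn : 2 < n) {j : Fin n} {S : Finset (Fin n)} (hj : j ∉ S)
    {t : ℕ} (h1 : 1 ≤ t) (h2 : t ≤ n - 1) :
    (j + ((t : ℕ) : Fin n)) - 1 ∉ S ↔ t - 1 ∉ Phi j S := by
  rcases eq_or_lt_of_le h1 with rfl | ht2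
  · simp only [Nat.cast_one]
    constructor
    · intro _ hc
      simp only [Phi, Finset.mem_filter, Finset.mem_Icc] at hc
      omega
    · intro _ hc
      rw [add_sub_cancel_right] at hc
      exact hj hc
  · have e : ((t - 1 : ℕ) : Fin n) = ((t : ℕ) : Fin n) - 1 := by
      push_cast [Nat.cast_sub h1]
      ring
    constructor
    · intro h hc
      simp only [Phi, Finset.mem_filter, Finset.mem_Icc] at hc
      rw [e] at hc
      have heq : j + (((t : ℕ) : Fin n) - 1) = j + ((t : ℕ) : Fin n) - 1 := by ring
      rw [heq] at hc
      exact h hc.2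
    · intro h hc
      apply h
      simp only [Phi, Finset.mem_filter, Finset.mem_Icc]
      refine ⟨⟨by omega, by omega⟩, ?_⟩
      rw [e]
      have : j + (((t : ℕ) : Fin n) - 1) = j + ((t : ℕ) : Fin n) - 1 := by ring
      rwa [this]

lemma mem_Phi {j : Fin n} {S : Finset (Fin n)} {t : ℕ} :
    t ∈ Phi j S ↔ (1 ≤ t ∧ t ≤ n - 1) ∧ j + ((t : ℕ) : Fin n) ∈ S := by
  simp [Phi, Finset.mem_filter, Finset.mem_Icc]

lemma Phi_card (hn : 2 < n) {j : Fin n} {S : Finset (Fin n)} (hj : j ∉ S) :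
    (Phi j S).card = S.card := by
  refine Finset.card_bij' (fun t _ => j + ((t : ℕ) : Fin n)) (fun s _ => (s - j).val)
    ?_ ?_ ?_ ?_
  · intro t ht
    exact (mem_Phi.mp ht).2
  · intro s hs
    have hne : s ≠ j := fun hc => hj (hc ▸ hs)
    obtain ⟨h1, h2, h3⟩ := val_sub_aux hn hne
    exact mem_Phi.mpr ⟨⟨h1, h2⟩, by rw [h3]; exact hs⟩
  · intro t ht
    obtain ⟨⟨h1, h2⟩, _⟩ := mem_Phi.mp ht
    show ((j + ((t : ℕ) : Fin n) - j : Fin n) : ℕ) = t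
    rw [add_sub_cancel_left, Fin.val_natCast, Nat.mod_eq_of_lt (by omega)]
  · intro s hs
    have hne : s ≠ j := fun hc => hj (hc ▸ hs)
    show j + ((((s - j).val : ℕ) : ℕ) : Fin n) = s
    exact (val_sub_aux hn hne).2.2

lemma Phi_lbc (hn : 2 < n) {j : Fin n} {S : Finset (Fin n)} (hj : j ∉ S) :
    lbc (Phi j S) = bS S := by
  unfold lbc bS
  refine Finset.card_bij' (fun t _ => j + ((t : ℕ) : Fin n)) (fun s _ => (s - j).val)
    ?_ ?_ ?_ ?_
  · intro t ht
    obtain ⟨htP, hblock⟩ := Finset.mem_filter.mp ht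
    obtain ⟨⟨h1, h2⟩, hmem⟩ := mem_Phi.mp htP
    exact Finset.mem_filter.mpr ⟨hmem, (block_iff_aux hn hj h1 h2).mpr hblock⟩
  · intro s hs
    obtain ⟨hmem, hblock⟩ := Finset.mem_filter.mp hs
    have hne : s ≠ j := fun hc => hj (hc ▸ hmem)
    obtain ⟨h1, h2, h3⟩ := val_sub_aux hn hne
    refine Finset.mem_filter.mpr ⟨mem_Phi.mpr ⟨⟨h1, h2⟩, by rw [h3]; exact hmem⟩, ?_⟩
    exact (block_iff_aux hn hj h1 h2).mp (by rwa [h3])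
  · intro t ht
    obtain ⟨htP, _⟩ := Finset.mem_filter.mp ht
    obtain ⟨⟨h1, h2⟩, _⟩ := mem_Phi.mp htP
    show ((j + ((t : ℕ) : Fin n) - j : Fin n) : ℕ) = t
    rw [add_sub_cancel_left, Fin.val_natCast, Nat.mod_eq_of_lt (by omega)]
  · intro s hs
    obtain ⟨hmem, _⟩ := Finset.mem_filter.mp hs
    have hne : s ≠ j := fun hc => hj (hc ▸ hmem)
    show j + ((((s - j).val : ℕ) : ℕ) : Fin n) = s
    exact (val_sub_aux hn hne).2.2

lemma Phi_sub {j : Fin n} {S : Finset (Fin n)} : Phi j S ⊆ Finset.Icc 1 (n-1) :=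
  Finset.filter_subset _ _


lemma Psi_Phi (hn : 2 < n) {j : Fin n} {S : Finset (Fin n)} (hj : j ∉ S) :
    (Phi j S).image (fun t => j + ((t : ℕ) : Fin n)) = S := by
  ext s
  simp only [Finset.mem_image]
  constructor
  · rintro ⟨t, ht, rfl⟩
    exact (mem_Phi.mp ht).2
  · intro hs
    have hne : s ≠ j := fun hc => hj (hc ▸ hs)
    obtain ⟨h1, h2, h3⟩ := val_sub_aux hn hne
    exact ⟨(s - j).val, mem_Phi.mpr ⟨⟨h1, h2⟩, by rw [h3]; exact hs⟩, h3⟩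

lemma Phi_Psi (hn : 2 < n) {j : Fin n} {T : Finset ℕ} (hT : T ⊆ Finset.Icc 1 (n-1)) :
    Phi j (T.image (fun t => j + ((t : ℕ) : Fin n))) = T := by
  ext t
  simp only [mem_Phi, Finset.mem_image]
  constructor
  · rintro ⟨⟨h1, h2⟩, t', ht', heq⟩
    obtain ⟨h1', h2'⟩ := Finset.mem_Icc.mp (hT ht')
    have := cast_inj_aux hn h2' h2 (add_left_cancel heq)
    rwa [← this]
  · intro ht
    obtain ⟨h1, h2⟩ := Finset.mem_Icc.mp (hT ht)
    exact ⟨⟨h1, h2⟩, t, ht, rfl⟩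

lemma Psi_not_mem (hn : 2 < n) {j : Fin n} {T : Finset ℕ}
    (hT : T ⊆ Finset.Icc 1 (n-1)) :
    j ∉ T.image (fun t => j + ((t : ℕ) : Fin n)) := by
  intro hc
  obtain ⟨t, ht, heq⟩ := Finset.mem_image.mp hc
  obtain ⟨h1, h2⟩ := Finset.mem_Icc.mp (hT ht)
  have : ((t : ℕ) : Fin n) = 0 := by
    have := left_eq_add.mp heq.symm
    exact this
  exact cast_ne_zero_aux hn h1 h2 this

lemma Psi_card (hn : 2 < n) {j : Fin n} {T : Finset ℕ}
    (hT : T ⊆ Finset.Icc 1 (n-1)) :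
    (T.image (fun t => j + ((t : ℕ) : Fin n))).card = T.card := by
  rw [← Phi_card hn (Psi_not_mem hn hT), Phi_Psi hn hT]

lemma slice_card (hn : 2 < n) (j : Fin n) {i k : ℕ} :
    ((Sfin n i k).filter (fun S => j ∉ S)).card = (Lset (n-1) i k).card := by
  refine Finset.card_bij' (fun S _ => Phi j S)
    (fun T _ => T.image (fun t => j + ((t : ℕ) : Fin n))) ?_ ?_ ?_ ?_
  · intro S hS
    simp only [Sfin, Finset.mem_filter, Finset.mem_univ, true_and] at hS
    obtain ⟨⟨hcard, hb⟩, hj⟩ := hS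
    exact mem_Lset.mpr ⟨Phi_sub, by rw [Phi_card hn hj, hcard],
      by rw [Phi_lbc hn hj, hb]⟩
  · intro T hT
    obtain ⟨hsub, hcard, hlbc⟩ := mem_Lset.mp hT
    simp only [Sfin, Finset.mem_filter, Finset.mem_univ, true_and]
    have hj := Psi_not_mem hn (j := j) hsub
    refine ⟨⟨by rw [Psi_card hn hsub, hcard], ?_⟩, hj⟩
    rw [← Phi_lbc hn hj, Phi_Psi hn hsub, hlbc]
  · intro S hS
    simp only [Sfin, Finset.mem_filter] at hS
    exact Psi_Phi hn hS.2
  · intro T hT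
    exact Phi_Psi hn (mem_Lset.mp hT).1

lemma compl_filter_card {S : Finset (Fin n)} :
    (Finset.univ.filter (fun j : Fin n => j ∉ S)).card = n - S.card := by
  have : Finset.univ.filter (fun j : Fin n => j ∉ S) = Sᶜ := by
    ext j
    simp [Finset.mem_compl]
  rw [this, Finset.card_compl, Fintype.card_fin]

lemma cyc_count (hn : 2 < n) {i k : ℕ} (hi1 : 1 ≤ i) (hi2 : i ≤ n - 1) (hk : 1 ≤ k) :
    (n - i) * (Sfin n i k).card = n * ((i-1).choose (k-1) * (n-i).choose k) := by
  have key : ∑ j : Fin n, ((Sfin n i k).filter (fun S => j ∉ S)).card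
      = ∑ S ∈ Sfin n i k, (n - i) := by
    have lhs : ∀ j : Fin n, ((Sfin n i k).filter (fun S => j ∉ S)).card
        = ∑ S ∈ Sfin n i k, if j ∉ S then 1 else 0 := fun j =>
      Finset.card_filter _ _
    simp_rw [lhs]
    rw [Finset.sum_comm]
    refine Finset.sum_congr rfl (fun S hS => ?_)
    have : ∑ j : Fin n, (if j ∉ S then 1 else 0)
        = (Finset.univ.filter (fun j : Fin n => j ∉ S)).card :=
      (Finset.card_filter _ _).symm
    rw [this, compl_filter_card]
    simp only [Sfin, Finset.mem_filter] at hS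
    rw [hS.2.1]
  have lval : ∀ j : Fin n, ((Sfin n i k).filter (fun S => j ∉ S)).card
      = (i-1).choose (k-1) * (n-i).choose k := by
    intro j
    rw [slice_card hn j, Lset_card hi1 (by omega) hk]
    congr 2
    omega
  rw [Finset.sum_congr rfl (fun j _ => lval j), Finset.sum_const, Finset.sum_const,
    Finset.card_univ, Fintype.card_fin, smul_eq_mul, smul_eq_mul] at key
  rw [mul_comm]
  exact key.symm

end cyclic


section reindex
variable [NeZero n]

lemma bS_pos {S : Finset (Fin n)} (hS : S ≠ Finset.univ) (hne : S.Nonempty) :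
    1 ≤ bS S := by
  obtain ⟨v, hv⟩ := hne
  have h1 : sv hS v ∈ S := sv_mem hS hv
  have h2 : sv hS v - 1 ∉ S := sv_sub_one_not_mem hS v
  have : sv hS v ∈ S.filter (fun j => j - 1 ∉ S) := Finset.mem_filter.mpr ⟨h1, h2⟩
  exact Finset.card_pos.mpr ⟨_, this⟩

lemma bS_le {S : Finset (Fin n)} : bS S ≤ S.card := Finset.card_filter_le _ _

lemma Sfin_zero_empty (hn : 2 < n) {i : ℕ} (hi1 : 1 ≤ i) (hi2 : i ≤ n - 1) :
    (Sfin n i 0).card = 0 := by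
  rw [Finset.card_eq_zero, Finset.eq_empty_iff_forall_notMem]
  intro S hS
  simp only [Sfin, Finset.mem_filter, Finset.mem_univ, true_and] at hS
  obtain ⟨hcard, hb⟩ := hS
  have hSne : S ≠ Finset.univ := by
    intro hc
    rw [hc, Finset.card_univ, Fintype.card_fin] at hcard
    omega
  have : S.Nonempty := Finset.card_pos.mp (by omega)
  have := bS_pos hSne this
  omega

lemma pre_img (hn : 2 < n) (S : Finset (Fin n)) :
    (S.image (EE n)).preimage (EE n) (Set.injOn_of_injective (EE_inj hn)) = S := by
  ext a
  simp [Finset.mem_preimage, Finset.mem_image, (EE_inj hn).eq_iff]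

/-- reindex the covered-components-polynomial sum by edge-index sets -/
lemma ccp_reindex (hn : 2 < n) :
    ccp (cycleG n) = ∑ S ∈ (Finset.univ : Finset (Fin n)).powerset,
      X 0 ^ kG (GS S) * X 1 ^ S.card * X 2 ^ cG (GS S) := by
  rw [ccp]
  rw [edgeFinset'_cycle hn]
  refine Finset.sum_nbij' (i := fun A => A.preimage (EE n) (Set.injOn_of_injective (EE_inj hn)))
    (j := fun S => S.image (EE n)) ?_ ?_ ?_ ?_ ?_
  · intro A hA
    exact Finset.mem_powerset.mpr (Finset.subset_univ _)
  · intro S hS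
    exact Finset.mem_powerset.mpr
      (Finset.image_subset_image (Finset.subset_univ S))
  · intro A hA
    obtain ⟨S, hSsub, hSA⟩ := Finset.subset_image_iff.mp (Finset.mem_powerset.mp hA)
    rw [← hSA]
    exact congrArg _ (pre_img hn S)
  · intro S hS
    exact pre_img hn S
  · intro A hA
    obtain ⟨S, hSsub, hSA⟩ := Finset.subset_image_iff.mp (Finset.mem_powerset.mp hA)
    subst hSA
    simp only [pre_img hn]
    have hGS : SimpleGraph.fromEdgeSet ((S.image (EE n) : Finset (Sym2 (Fin n))) :
        Set (Sym2 (Fin n))) = GS S := rfl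
    rw [hGS, Finset.card_image_of_injective _ (EE_inj hn)]

end reindex


section assembly
variable [NeZero n]

lemma inner_sum (hn : 2 < n) {i : ℕ} (hi1 : 1 ≤ i) (hi2 : i ≤ n - 1) :
    (∑ S ∈ Finset.univ.filter (fun S : Finset (Fin n) => S.card = i),
        (X 2 : MvPolynomial (Fin 3) ℚ) ^ bS S)
      = MvPolynomial.C ((n : ℚ) / ((n : ℚ) - (i : ℚ))) *
        ∑ k ∈ Finset.Icc 1 (min i (n - i)),
          (((i-1).choose (k-1) * (n-i).choose k : ℕ) : MvPolynomial (Fin 3) ℚ) *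
            X 2 ^ k := by
  have hin : i < n := by omega
  have hne : ((n : ℚ) - (i : ℚ)) ≠ 0 := by
    have h1 : (i : ℚ) < (n : ℚ) := by exact_mod_cast hin
    exact sub_ne_zero_of_ne h1.ne'
  have hni : ((n - i : ℕ) : MvPolynomial (Fin 3) ℚ)
      = MvPolynomial.C ((n : ℚ) - (i : ℚ)) := by
    rw [← MvPolynomial.C_eq_coe_nat]
    congr 1
    push_cast [Nat.cast_sub hin.le]
    ring
  have hCC : (MvPolynomial.C ((n : ℚ) - (i : ℚ)) : MvPolynomial (Fin 3) ℚ) *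
      MvPolynomial.C (((n : ℚ) - (i : ℚ))⁻¹) = 1 := by
    rw [← MvPolynomial.C_mul, mul_inv_cancel₀ hne, MvPolynomial.C_1]
  have hmaps : ∀ S ∈ Finset.univ.filter (fun S : Finset (Fin n) => S.card = i),
      bS S ∈ Finset.range (n+1) := by
    intro S hS
    simp only [Finset.mem_filter] at hS
    have := bS_le (S := S)
    rw [Finset.mem_range]
    omega
  rw [← Finset.sum_fiberwise_of_maps_to hmaps
    (fun S => (X 2 : MvPolynomial (Fin 3) ℚ) ^ bS S)]
  have hfiber : ∀ k : ℕ, (Finset.univ.filter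
        (fun S : Finset (Fin n) => S.card = i)).filter (fun S => bS S = k)
      = Sfin n i k := by
    intro k
    rw [Sfin, Finset.filter_filter]
  have hinner : ∀ k ∈ Finset.range (n+1),
      (∑ S ∈ (Finset.univ.filter (fun S : Finset (Fin n) => S.card = i)).filter
        (fun S => bS S = k), (X 2 : MvPolynomial (Fin 3) ℚ) ^ bS S)
      = (((n - i) * (Sfin n i k).card : ℕ) : MvPolynomial (Fin 3) ℚ) * X 2 ^ k
          * MvPolynomial.C (((n : ℚ) - (i : ℚ))⁻¹) := by
    intro k _
    rw [Finset.sum_congr rfl (fun S hS => by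
      rw [(Finset.mem_filter.mp hS).2]), Finset.sum_const, hfiber, nsmul_eq_mul]
    rw [Nat.cast_mul, hni]
    linear_combination (-(((Sfin n i k).card : MvPolynomial (Fin 3) ℚ) * X 2 ^ k)) * hCC
  rw [Finset.sum_congr rfl hinner]
  have hsub : Finset.Icc 1 (min i (n - i)) ⊆ Finset.range (n + 1) := by
    intro k hk
    simp only [Finset.mem_Icc] at hk
    rw [Finset.mem_range]
    omega
  have hvanish : ∀ k ∈ Finset.range (n+1), k ∉ Finset.Icc 1 (min i (n - i)) →
      (((n - i) * (Sfin n i k).card : ℕ) : MvPolynomial (Fin 3) ℚ) * X 2 ^ k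
        * MvPolynomial.C (((n : ℚ) - (i : ℚ))⁻¹) = 0 := by
    intro k _ hk
    simp only [Finset.mem_Icc, not_and_or, not_le] at hk
    have hzero : (n - i) * (Sfin n i k).card = 0 := by
      rcases hk with hk0 | hkmin
      · have hk0' : k = 0 := by omega
        subst hk0'
        rw [Sfin_zero_empty hn hi1 hi2, mul_zero]
      · have hk1 : 1 ≤ k := by
          rcases Nat.eq_zero_or_pos k with rfl | h
          · omega
          · exact h
        rw [cyc_count hn hi1 hi2 hk1]
        have hb0 : (i-1).choose (k-1) * (n-i).choose k = 0 := by
          rcases Nat.lt_or_ge i k with h | h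
          · rw [Nat.choose_eq_zero_of_lt (by omega), zero_mul]
          · have : n - i < k := by omega
            rw [Nat.choose_eq_zero_of_lt this, mul_zero]
        rw [hb0, mul_zero]
    rw [hzero]
    simp
  rw [← Finset.sum_subset hsub hvanish]
  rw [Finset.mul_sum]
  refine Finset.sum_congr rfl (fun k hk => ?_)
  simp only [Finset.mem_Icc] at hk
  rw [cyc_count hn hi1 hi2 hk.1]
  have hCC2 : (MvPolynomial.C ((n : ℚ)) : MvPolynomial (Fin 3) ℚ) *
      MvPolynomial.C (((n : ℚ) - (i : ℚ))⁻¹)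
      = MvPolynomial.C ((n : ℚ) / ((n : ℚ) - (i : ℚ))) := by
    rw [← MvPolynomial.C_mul, div_eq_mul_inv]
  rw [Nat.cast_mul, ← MvPolynomial.C_eq_coe_nat n]
  linear_combination ((((i-1).choose (k-1) * (n-i).choose k : ℕ) :
    MvPolynomial (Fin 3) ℚ) * X 2 ^ k) * hCC2

lemma poly_main (hn : 2 < n) :
    MvPolynomial.map (Int.castRingHom ℚ) (ccp (cycleG n)) =
      X 0 ^ n + (∑ i ∈ Finset.Icc 1 (n - 1),
        MvPolynomial.C ((n : ℚ) / ((n : ℚ) - (i : ℚ))) * X 0 ^ (n - i) * X 1 ^ i *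
          ∑ k ∈ Finset.Icc 1 (min i (n - i)),
            (((i - 1).choose (k - 1) * (n - i).choose k : ℕ) : MvPolynomial (Fin 3) ℚ) *
              X 2 ^ k)
      + X 0 * X 1 ^ n * X 2 := by
  rw [ccp_reindex hn, map_sum]
  have hterm : ∀ S : Finset (Fin n),
      MvPolynomial.map (Int.castRingHom ℚ)
        (X 0 ^ kG (GS S) * X 1 ^ S.card * X 2 ^ cG (GS S))
      = (X 0 : MvPolynomial (Fin 3) ℚ) ^ kG (GS S) * X 1 ^ S.card
          * X 2 ^ cG (GS S) := by
    intro S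
    simp [map_mul, map_pow, MvPolynomial.map_X]
  rw [Finset.sum_congr rfl (fun S _ => hterm S)]
  rw [← Finset.sum_erase_add _ _ (Finset.mem_powerset_self (Finset.univ : Finset (Fin n)))]
  have huniv : (X 0 : MvPolynomial (Fin 3) ℚ) ^ kG (GS (Finset.univ : Finset (Fin n)))
      * X 1 ^ (Finset.univ : Finset (Fin n)).card
      * X 2 ^ cG (GS (Finset.univ : Finset (Fin n)))
      = X 0 * X 1 ^ n * X 2 := by
    rw [kG_univ hn, cG_univ hn, Finset.card_univ, Fintype.card_fin, pow_one, pow_one]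
  rw [huniv]
  have hrest : ∀ S ∈ ((Finset.univ : Finset (Fin n)).powerset).erase Finset.univ,
      (X 0 : MvPolynomial (Fin 3) ℚ) ^ kG (GS S) * X 1 ^ S.card * X 2 ^ cG (GS S)
      = (X 0 : MvPolynomial (Fin 3) ℚ) ^ (n - S.card) * X 1 ^ S.card * X 2 ^ bS S := by
    intro S hS
    have hSne : S ≠ Finset.univ := (Finset.mem_erase.mp hS).1
    rw [kG_GS hSne hn, cG_GS hSne hn]
  rw [Finset.sum_congr rfl hrest]
  have hmaps : ∀ S ∈ ((Finset.univ : Finset (Fin n)).powerset).erase Finset.univ,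
      S.card ∈ Finset.range n := by
    intro S hS
    have hSne : S ≠ Finset.univ := (Finset.mem_erase.mp hS).1
    have : S.card < n := by
      have hlt := Finset.card_lt_card
        ((Finset.ssubset_iff_subset_ne).mpr ⟨Finset.subset_univ S, hSne⟩)
      rwa [Finset.card_univ, Fintype.card_fin] at hlt
    rwa [Finset.mem_range]
  rw [← Finset.sum_fiberwise_of_maps_to hmaps
    (fun S => (X 0 : MvPolynomial (Fin 3) ℚ) ^ (n - S.card) * X 1 ^ S.card * X 2 ^ bS S)]
  have hrange : Finset.range n = insert 0 (Finset.Icc 1 (n-1)) := by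
    ext a
    simp only [Finset.mem_range, Finset.mem_insert, Finset.mem_Icc]
    omega
  rw [hrange, Finset.sum_insert (by simp)]
  -- the i = 0 fiber
  have hzero_fiber : (((Finset.univ : Finset (Fin n)).powerset).erase
      Finset.univ).filter (fun S => S.card = 0) = {(∅ : Finset (Fin n))} := by
    ext S
    simp only [Finset.mem_filter, Finset.mem_erase, Finset.mem_powerset,
      Finset.mem_singleton, Finset.card_eq_zero]
    constructor
    · rintro ⟨_, h⟩
      exact h
    · rintro rfl
      refine ⟨⟨?_, Finset.empty_subset _⟩, rfl⟩
      intro h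
      have := congrArg Finset.card h
      rw [Finset.card_empty, Finset.card_univ, Fintype.card_fin] at this
      omega
  have hzero_term : ∑ S ∈ (((Finset.univ : Finset (Fin n)).powerset).erase
      Finset.univ).filter (fun S => S.card = 0),
      (X 0 : MvPolynomial (Fin 3) ℚ) ^ (n - S.card) * X 1 ^ S.card * X 2 ^ bS S
      = X 0 ^ n := by
    rw [hzero_fiber, Finset.sum_singleton]
    have hb : bS (∅ : Finset (Fin n)) = 0 := by simp [bS]
    rw [hb, Finset.card_empty]
    simp
  rw [hzero_term]
  -- the fibers for 1 ≤ i ≤ n-1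
  have hfiber_eq : ∀ i ∈ Finset.Icc 1 (n-1),
      (((Finset.univ : Finset (Fin n)).powerset).erase Finset.univ).filter
        (fun S => S.card = i)
      = Finset.univ.filter (fun S : Finset (Fin n) => S.card = i) := by
    intro i hi
    simp only [Finset.mem_Icc] at hi
    ext S
    simp only [Finset.mem_filter, Finset.mem_erase, Finset.mem_powerset,
      Finset.mem_univ, true_and]
    constructor
    · rintro ⟨_, h⟩
      exact h
    · intro h
      refine ⟨⟨?_, Finset.subset_univ _⟩, h⟩
      intro hc
      rw [hc, Finset.card_univ, Fintype.card_fin] at h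
      omega
  have hmain : ∀ i ∈ Finset.Icc 1 (n-1),
      (∑ S ∈ (((Finset.univ : Finset (Fin n)).powerset).erase Finset.univ).filter
        (fun S => S.card = i),
        (X 0 : MvPolynomial (Fin 3) ℚ) ^ (n - S.card) * X 1 ^ S.card * X 2 ^ bS S)
      = MvPolynomial.C ((n : ℚ) / ((n : ℚ) - (i : ℚ))) * X 0 ^ (n - i) * X 1 ^ i *
          ∑ k ∈ Finset.Icc 1 (min i (n - i)),
            (((i - 1).choose (k - 1) * (n - i).choose k : ℕ) : MvPolynomial (Fin 3) ℚ) *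
              X 2 ^ k := by
    intro i hi
    rw [hfiber_eq i hi]
    simp only [Finset.mem_Icc] at hi
    have hstep : ∀ S ∈ Finset.univ.filter (fun S : Finset (Fin n) => S.card = i),
        (X 0 : MvPolynomial (Fin 3) ℚ) ^ (n - S.card) * X 1 ^ S.card * X 2 ^ bS S
        = (X 0 : MvPolynomial (Fin 3) ℚ) ^ (n - i) * X 1 ^ i * X 2 ^ bS S := by
      intro S hS
      rw [(Finset.mem_filter.mp hS).2]
    rw [Finset.sum_congr rfl hstep]
    have := inner_sum hn hi.1 hi.2
    calc ∑ S ∈ Finset.univ.filter (fun S : Finset (Fin n) => S.card = i),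
          (X 0 : MvPolynomial (Fin 3) ℚ) ^ (n - i) * X 1 ^ i * X 2 ^ bS S
        = (X 0 : MvPolynomial (Fin 3) ℚ) ^ (n - i) * X 1 ^ i *
            ∑ S ∈ Finset.univ.filter (fun S : Finset (Fin n) => S.card = i),
              (X 2 : MvPolynomial (Fin 3) ℚ) ^ bS S := by
          rw [Finset.mul_sum]
      _ = _ := by
          rw [this]
          ring
  rw [Finset.sum_congr rfl hmain]

lemma single_triple_eq {a b c a' b' c' : ℕ} :
    (Finsupp.single (0 : Fin 3) a + Finsupp.single 1 b + Finsupp.single 2 c)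
      = (Finsupp.single (0 : Fin 3) a' + Finsupp.single 1 b' + Finsupp.single 2 c')
    ↔ a = a' ∧ b = b' ∧ c = c' := by
  constructor
  · intro h
    refine ⟨?_, ?_, ?_⟩
    · have h0 := DFunLike.congr_fun h 0
      simp [Finsupp.single_apply, Fin.ext_iff] at h0
      exact h0
    · have h1 := DFunLike.congr_fun h 1
      simp [Finsupp.single_apply, Fin.ext_iff] at h1
      exact h1
    · have h2 := DFunLike.congr_fun h 2
      simp [Finsupp.single_apply, Fin.ext_iff] at h2
      exact h2
  · rintro ⟨rfl, rfl, rfl⟩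
    rfl

lemma coeff3_term (a b c a' b' c' : ℕ) :
    MvPolynomial.coeff
      (Finsupp.single (0 : Fin 3) a + Finsupp.single 1 b + Finsupp.single 2 c)
      ((X 0 : MvPolynomial (Fin 3) ℤ) ^ a' * X 1 ^ b' * X 2 ^ c')
    = if a = a' ∧ b = b' ∧ c = c' then 1 else 0 := by
  rw [MvPolynomial.X_pow_eq_monomial, MvPolynomial.X_pow_eq_monomial,
    MvPolynomial.X_pow_eq_monomial, MvPolynomial.monomial_mul,
    MvPolynomial.monomial_mul, MvPolynomial.coeff_monomial]
  have heq : ((Finsupp.single (0 : Fin 3) a' + Finsupp.single 1 b' + Finsupp.single 2 c')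
      = (Finsupp.single (0 : Fin 3) a + Finsupp.single 1 b + Finsupp.single 2 c))
      ↔ (a = a' ∧ b = b' ∧ c = c') := by
    rw [single_triple_eq]
    constructor
    · rintro ⟨h1, h2, h3⟩
      exact ⟨h1.symm, h2.symm, h3.symm⟩
    · rintro ⟨h1, h2, h3⟩
      exact ⟨h1.symm, h2.symm, h3.symm⟩
  rw [if_congr heq rfl rfl]
  simp

lemma coeff3_ccp (hn : 2 < n) {k : ℕ} (hk1 : 0 < k) (hk2 : k < n) :
    coeff3 (ccp (cycleG n)) (n - k) k k = ((Sfin n k k).card : ℤ) := by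
  rw [coeff3, ccp_reindex hn, MvPolynomial.coeff_sum]
  rw [Finset.sum_congr rfl
    (fun S _ => coeff3_term (n-k) k k (kG (GS S)) S.card (cG (GS S)))]
  simp only [Finset.sum_boole]
  congr 1
  congr 1
  ext S
  simp only [Finset.mem_filter, Finset.mem_powerset, Finset.subset_univ, true_and,
    Sfin, Finset.mem_univ]
  by_cases hS : S = Finset.univ
  · subst hS
    rw [kG_univ hn, cG_univ hn, Finset.card_univ, Fintype.card_fin]
    constructor
    · rintro ⟨_, h, _⟩
      omega
    · rintro ⟨h, _⟩
      omega
  · rw [kG_GS hS hn, cG_GS hS hn]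
    have hcard : S.card < n := by
      have hlt := Finset.card_lt_card
        ((Finset.ssubset_iff_subset_ne).mpr ⟨Finset.subset_univ S, hS⟩)
      rwa [Finset.card_univ, Fintype.card_fin] at hlt
    constructor
    · rintro ⟨h1, h2, h3⟩
      exact ⟨h2.symm, h3.symm⟩
    · rintro ⟨h1, h2⟩
      exact ⟨by omega, h1.symm, h2.symm⟩

lemma bS_eq_card_iff {S : Finset (Fin n)} :
    bS S = S.card ↔ ∀ j ∈ S, j - 1 ∉ S := by
  constructor
  · intro h j hj
    have hle : S.card ≤ (S.filter (fun j => j - 1 ∉ S)).card := by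
      rw [← bS, h]
    have hfil : S.filter (fun j => j - 1 ∉ S) = S :=
      Finset.eq_of_subset_of_card_le (Finset.filter_subset _ _) hle
    exact (Finset.filter_eq_self.mp hfil) j hj
  · intro h
    rw [bS, Finset.filter_eq_self.mpr h]

lemma matching_iff (hn : 2 < n) {S : Finset (Fin n)} :
    (∀ e ∈ S.image (EE n), ∀ f ∈ S.image (EE n), e ≠ f →
      ∀ v : Fin n, ¬(v ∈ e ∧ v ∈ f)) ↔ ∀ j ∈ S, j - 1 ∉ S := by
  constructor
  · intro h j hj hj1
    have h1 : EE n (j-1) ∈ S.image (EE n) := Finset.mem_image_of_mem _ hj1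
    have h2 : EE n j ∈ S.image (EE n) := Finset.mem_image_of_mem _ hj
    have hne : EE n (j-1) ≠ EE n j := by
      intro hc
      exact one_ne_zero' hn (sub_eq_self.mp (EE_inj hn hc))
    refine h _ h1 _ h2 hne j ⟨?_, ?_⟩
    · rw [EE, Sym2.mem_iff]
      right
      rw [sub_add_cancel]
    · rw [EE, Sym2.mem_iff]
      left
      rfl
  · intro h e he f hf hnef v hv
    obtain ⟨hve, hvf⟩ := hv
    obtain ⟨a, ha, rfl⟩ := Finset.mem_image.mp he
    obtain ⟨b, hb, rfl⟩ := Finset.mem_image.mp hf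
    rw [EE, Sym2.mem_iff] at hve hvf
    have hab : a ≠ b := fun hc => hnef (by rw [hc])
    rcases hve with h1 | h1 <;> rcases hvf with h2 | h2
    · exact hab (h1.symm.trans h2)
    · apply h a ha
      have hba : a - 1 = b := by
        rw [h1.symm.trans h2, add_sub_cancel_right]
      rw [hba]
      exact hb
    · apply h b hb
      have hba : b - 1 = a := by
        rw [h2.symm.trans h1, add_sub_cancel_right]
      rw [hba]
      exact ha
    · exact hab (add_right_cancel (h1.symm.trans h2))

lemma numMatchings_eq (hn : 2 < n) {k : ℕ} :
    numMatchings n k = (Sfin n k k).card := by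
  rw [numMatchings, edgeFinset'_cycle hn]
  refine Finset.card_bij'
    (i := fun A _ => A.preimage (EE n) (Set.injOn_of_injective (EE_inj hn)))
    (j := fun S _ => S.image (EE n)) ?_ ?_ ?_ ?_
  · intro A hA
    simp only [Finset.mem_filter, Finset.mem_powerset] at hA
    obtain ⟨hsub, hcard, hmatch⟩ := hA
    obtain ⟨S0, _, rfl⟩ := Finset.subset_image_iff.mp hsub
    simp only [pre_img hn]
    simp only [Sfin, Finset.mem_filter, Finset.mem_univ, true_and]
    have hc : S0.card = k := by
      rwa [Finset.card_image_of_injective _ (EE_inj hn)] at hcard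
    refine ⟨hc, ?_⟩
    rw [← hc]
    exact bS_eq_card_iff.mpr ((matching_iff hn).mp hmatch)
  · intro S hS
    simp only [Sfin, Finset.mem_filter, Finset.mem_univ, true_and] at hS
    obtain ⟨hcard, hb⟩ := hS
    simp only [Finset.mem_filter, Finset.mem_powerset]
    refine ⟨Finset.image_subset_image (Finset.subset_univ _), ?_, ?_⟩
    · rw [Finset.card_image_of_injective _ (EE_inj hn), hcard]
    · exact (matching_iff hn).mpr (bS_eq_card_iff.mp (by rw [hb, hcard]))
  · intro A hA
    simp only [Finset.mem_filter, Finset.mem_powerset] at hA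
    obtain ⟨S0, _, rfl⟩ := Finset.subset_image_iff.mp hA.1
    simp only [pre_img hn]
  · intro S _
    exact pre_img hn S

lemma card_Sfin_q (hn : 2 < n) {k : ℕ} (hk1 : 0 < k) (hk2 : k < n) :
    (((Sfin n k k).card : ℕ) : ℚ)
      = (n : ℚ) / ((n : ℚ) - (k : ℚ)) * ((n - k).choose k : ℚ) := by
  have hcc := cyc_count hn (i := k) (k := k) hk1 (by omega) hk1
  rw [Nat.choose_self, one_mul] at hcc
  have hne : ((n : ℚ) - (k : ℚ)) ≠ 0 := by
    have h1 : (k : ℚ) < (n : ℚ) := by exact_mod_cast hk2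
    exact sub_ne_zero_of_ne h1.ne'
  have hq : (((n - k : ℕ) : ℚ)) * ((Sfin n k k).card : ℚ)
      = (n : ℚ) * ((n - k).choose k : ℚ) := by
    exact_mod_cast congrArg (fun x : ℕ => (x : ℚ)) hcc
  have hnk : ((n - k : ℕ) : ℚ) = (n : ℚ) - (k : ℚ) := by
    push_cast [Nat.cast_sub hk2.le]
    ring
  rw [hnk] at hq
  field_simp
  linarith [hq]


end assembly

end CCPAux

/-- For the cycle `Cₙ` with `n > 2`,
`C(Cₙ) = xⁿ + ∑_{i=1}^{n−1} (n/(n−i))·x^{n−i} yⁱ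
  ∑_{k=1}^{min(i,n−i)} C(i−1,k−1)·C(n−i,k)·z^k + x yⁿ z`
(as a polynomial with rational coefficients).  In particular, the coefficient of
`x^{n−k} y^k z^k` in `C(Cₙ)` equals `(n/(n−k))·C(n−k,k)`, the number of `k`-matchings
of `Cₙ`. -/
theorem ccp_cycle (n : ℕ) (hn : 2 < n) :
    MvPolynomial.map (Int.castRingHom ℚ) (ccp (cycleG n)) =
      X 0 ^ n + (∑ i ∈ Finset.Icc 1 (n - 1),
        MvPolynomial.C ((n : ℚ) / ((n : ℚ) - (i : ℚ))) * X 0 ^ (n - i) * X 1 ^ i *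
          ∑ k ∈ Finset.Icc 1 (min i (n - i)),
            (((i - 1).choose (k - 1) * (n - i).choose k : ℕ) : MvPolynomial (Fin 3) ℚ) *
              X 2 ^ k)
      + X 0 * X 1 ^ n * X 2 ∧
    ∀ k : ℕ, 0 < k → k < n →
      (coeff3 (ccp (cycleG n)) (n - k) k k : ℚ) =
        (n : ℚ) / ((n : ℚ) - (k : ℚ)) * ((n - k).choose k : ℚ) ∧
      coeff3 (ccp (cycleG n)) (n - k) k k = numMatchings n k := by
  haveI : NeZero n := ⟨by omega⟩
  refine ⟨CCPAux.poly_main hn, ?_⟩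
  intro k hk1 hk2
  have hco := CCPAux.coeff3_ccp hn hk1 hk2
  constructor
  · rw [hco]
    push_cast
    exact_mod_cast CCPAux.card_Sfin_q hn hk1 hk2
  · rw [hco, CCPAux.numMatchings_eq hn]


end
end
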